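/- arXiv:1507.01776 — 3 statements merged into one kernel-verified Lean document; each statement's English description precedes it below -/
import Mathlib

section
/- Let n ≥ 1 and S, S' ⊆ {1,…,n}. There exists a digraph homomorphism from Q_S to Q_{S'} mapping the initial vertex of Q_S to the initial vertex of Q_{S'} and the terminal vertex of Q_S to the terminal vertex of Q_{S'} if and only if S ⊆ S'. -/
/-- A homomorphism between digraphs given by their edge relations. -/
def IsDigraphHom {V₁ V₂ : Type*} (E₁ : V₁ → V₁ → Prop) (E₂ : V₂ → V₂ → Prop)
    (h : V₁ → V₂) : Prop :=
  ∀ a b, E₁ a b → E₂ (h a) (h b)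

/-- The directions of the edges of the oriented path `Q_S`. -/
def QDirs (n : ℕ) (S : Finset (Fin n)) : List Bool :=
  true :: (((List.finRange n).flatMap fun l =>
    if l ∈ S then [true] else [true, false, true]) ++ [true])

/-- The edge relation of the oriented path whose edge directions are given by `ds`;
its vertices are `0, …, ds.length`, `0` being initial and `ds.length` terminal. -/
def pathEdge (ds : List Bool) : Fin (ds.length + 1) → Fin (ds.length + 1) → Prop :=
  fun a b => ∃ i : Fin ds.length,
    if ds.get i = true then a = i.castSucc ∧ b = i.succ
    else a = i.succ ∧ b = i.castSucc

/-! ### Infrastructure -/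

def blk (b : Bool) : List Bool := if b then [true] else [true, false, true]

def QL (bs : List Bool) : List Bool := true :: (bs.flatMap blk ++ [true])

/-- Edge relation on ℕ indices. -/
def NEdge (ds : List Bool) (a b : ℕ) : Prop :=
  ∃ i, i < ds.length ∧
    ((ds.getD i true = true ∧ a = i ∧ b = i + 1) ∨
     (ds.getD i true = false ∧ a = i + 1 ∧ b = i))

/-- Level of position `i`. -/
def lvlN (ds : List Bool) (i : ℕ) : ℤ :=
  ((ds.take i).count true : ℤ) - ((ds.take i).count false : ℤ)

lemma lvlN_zero (ds : List Bool) : lvlN ds 0 = 0 := by simp [lvlN]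

lemma NEdge_le {ds : List Bool} {a b : ℕ} (h : NEdge ds a b) :
    a ≤ ds.length ∧ b ≤ ds.length := by
  obtain ⟨i, hi, h | h⟩ := h <;> omega

lemma lvlN_succ {ds : List Bool} {i : ℕ} (h : i < ds.length) :
    lvlN ds (i + 1) = lvlN ds i + (if ds.getD i true = true then 1 else -1) := by
  have : ds.take (i+1) = ds.take i ++ [ds[i]] := by
    rw [List.take_succ]; simp [List.getElem?_eq_getElem h]
  rw [List.getD_eq_getElem ds true h]
  unfold lvlN
  rw [this, List.count_append, List.count_append]
  rcases hb : ds[i] <;> simp [hb] <;> push_cast <;> ring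

lemma NEdge_lvl {ds : List Bool} {a b : ℕ} (h : NEdge ds a b) :
    lvlN ds b = lvlN ds a + 1 := by
  obtain ⟨i, hi, ⟨hd, rfl, rfl⟩ | ⟨hd, rfl, rfl⟩⟩ := h <;>
    rw [lvlN_succ hi, hd] <;> simp

lemma NEdge_append {d₁ d₂ : List Bool} {a b : ℕ} :
    NEdge (d₁ ++ d₂) a b ↔ NEdge d₁ a b ∨
      ∃ a' b', NEdge d₂ a' b' ∧ a = a' + d₁.length ∧ b = b' + d₁.length := by
  constructor
  · rintro ⟨i, hi, hcase⟩
    rw [List.length_append] at hi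
    by_cases h1 : i < d₁.length
    · left
      exact ⟨i, h1, by rwa [List.getD_append _ _ _ _ h1] at hcase⟩
    · right
      push_neg at h1
      obtain ⟨j, rfl⟩ : ∃ j, i = d₁.length + j := ⟨i - d₁.length, by omega⟩
      rw [List.getD_append_right _ _ _ _ (by omega)] at hcase
      simp only [Nat.add_sub_cancel_left] at hcase
      rcases hcase with ⟨hd, rfl, rfl⟩ | ⟨hd, rfl, rfl⟩
      · exact ⟨j, j+1, ⟨j, by omega, Or.inl ⟨hd, rfl, rfl⟩⟩, by omega, by omega⟩
      · exact ⟨j+1, j, ⟨j, by omega, Or.inr ⟨hd, rfl, rfl⟩⟩, by omega, by omega⟩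
  · rintro (⟨i, hi, hcase⟩ | ⟨a', b', ⟨i, hi, hcase⟩, rfl, rfl⟩)
    · exact ⟨i, by rw [List.length_append]; omega,
        by rwa [List.getD_append _ _ _ _ hi]⟩
    · refine ⟨d₁.length + i, by rw [List.length_append]; omega, ?_⟩
      rw [List.getD_append_right _ _ _ _ (by omega)]
      simp only [Nat.add_sub_cancel_left]
      rcases hcase with ⟨hd, rfl, rfl⟩ | ⟨hd, rfl, rfl⟩
      · exact Or.inl ⟨hd, by omega, by omega⟩
      · exact Or.inr ⟨hd, by omega, by omega⟩

lemma NEdge_shift {d₁ d₂ : List Bool} {a b : ℕ} (h : NEdge d₂ a b) :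
    NEdge (d₁ ++ d₂) (a + d₁.length) (b + d₁.length) :=
  NEdge_append.2 (Or.inr ⟨a, b, h, rfl, rfl⟩)

lemma lvlN_append_left {d₁ d₂ : List Bool} {i : ℕ} (h : i ≤ d₁.length) :
    lvlN (d₁ ++ d₂) i = lvlN d₁ i := by
  unfold lvlN; rw [List.take_append_of_le_length h]

lemma lvlN_append_right (d₁ d₂ : List Bool) (j : ℕ) :
    lvlN (d₁ ++ d₂) (d₁.length + j) = lvlN d₁ d₁.length + lvlN d₂ j := by
  unfold lvlN
  rw [List.take_append, List.count_append, List.count_append, List.take_length,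
    List.take_of_length_le (Nat.le_add_right _ _), Nat.add_sub_cancel_left]
  push_cast; ring

lemma QL_cons_true (bs : List Bool) : QL (true :: bs) = [true] ++ QL bs := by
  simp [QL, blk]

lemma QL_cons_false (bs : List Bool) : QL (false :: bs) = [true, true, false] ++ QL bs := by
  simp [QL, blk]

lemma QL_two_le (bs : List Bool) : 2 ≤ (QL bs).length := by
  simp [QL]

lemma core_head (bs : List Bool) : ∃ t, bs.flatMap blk ++ [true] = true :: t := by
  cases bs with
  | nil => exact ⟨[], rfl⟩
  | cons b bs => cases b <;> simp [blk] 

/-- No edge of `QL bs` ends at the initial vertex. -/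
lemma NEdge_to_zero {bs : List Bool} {a : ℕ} (h : NEdge (QL bs) a 0) : False := by
  obtain ⟨i, hi, ⟨hd, rfl, hb⟩ | ⟨hd, rfl, rfl⟩⟩ := h
  · omega
  · simp [QL] at hd

lemma lvl_core_nonneg : ∀ (bs : List Bool) (j : ℕ), 0 ≤ lvlN (bs.flatMap blk ++ [true]) j := by
  intro bs
  induction bs with
  | nil =>
    intro j
    match j with
    | 0 => simp [lvlN]
    | j + 1 => simp [lvlN, List.take_succ]; rcases j <;> simp
  | cons b bs ih =>
    intro j
    have hrw : (b :: bs).flatMap blk ++ [true] = blk b ++ (bs.flatMap blk ++ [true]) := by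
      simp [blk]
    rw [hrw]
    by_cases hj : j ≤ (blk b).length
    · rw [lvlN_append_left hj]
      cases b <;> simp [blk] at hj ⊢ <;> interval_cases j <;> simp [lvlN, blk, List.take_succ]
    · obtain ⟨j', rfl⟩ : ∃ j', j = (blk b).length + j' := ⟨j - (blk b).length, by omega⟩
      rw [lvlN_append_right]
      have h1 : lvlN (blk b) (blk b).length = 1 := by cases b <;> simp [lvlN, blk]
      rw [h1]
      have := ih j'
      omega

/-- In `QL bs`, every position `≥ 1` has level `≥ 1`. -/
lemma QL_lvl_pos (bs : List Bool) {i : ℕ} (hi : 1 ≤ i) : 1 ≤ lvlN (QL bs) i := by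
  obtain ⟨j, rfl⟩ : ∃ j, i = 1 + j := ⟨i - 1, by omega⟩
  have : QL bs = [true] ++ (bs.flatMap blk ++ [true]) := by simp [QL]
  rw [this]
  have := lvlN_append_right [true] (bs.flatMap blk ++ [true]) j
  simp only [List.length_singleton] at this
  rw [this]
  have h1 : lvlN [true] 1 = 1 := by simp [lvlN]
  have := lvl_core_nonneg bs j
  omega

lemma QL_getD_zero (bs : List Bool) : (QL bs).getD 0 true = true := by simp [QL]

lemma QL_getD_one (bs : List Bool) : (QL bs).getD 1 true = true := by
  obtain ⟨t, ht⟩ := core_head bs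
  simp [QL, ht]

lemma three_path_exists : ∀ (bs : List Bool) (l : ℕ), bs.getD l false = true →
    ∃ x u v y, NEdge (QL bs) x u ∧ NEdge (QL bs) u v ∧ NEdge (QL bs) v y ∧
      lvlN (QL bs) u = (l : ℤ) + 1 := by
  intro bs
  induction bs with
  | nil => intro l h; simp at h
  | cons b bs ih =>
    intro l h
    match l with
    | 0 =>
      have hb : b = true := by simpa using h
      subst hb
      rw [QL_cons_true]
      have hlen : 2 < ([true] ++ QL bs).length := by
        have := QL_two_le bs; simp only [List.length_append, List.length_singleton]; omega
      have hlen1 : (QL bs).length ≥ 2 := QL_two_le bs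
      refine ⟨0, 1, 2, 3, ?_, ?_, ?_, ?_⟩
      · exact ⟨0, by simp only [List.length_append, List.length_singleton]; omega, Or.inl ⟨by simp, rfl, rfl⟩⟩
      · refine ⟨1, by simp only [List.length_append, List.length_singleton]; omega, Or.inl ⟨?_, rfl, rfl⟩⟩
        have := QL_getD_zero bs
        rwa [List.getD_append_right _ _ _ _ (by simp)]
      · refine ⟨2, by simp only [List.length_append, List.length_singleton]; omega, Or.inl ⟨?_, rfl, rfl⟩⟩
        have := QL_getD_one bs
        rwa [List.getD_append_right _ _ _ _ (by simp)]
      · rw [lvlN_append_left (by simp)]; simp [lvlN]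
    | l + 1 =>
      have h' : bs.getD l false = true := by simpa using h
      obtain ⟨x, u, v, y, e1, e2, e3, hlvl⟩ := ih l h'
      rcases b with _ | _
      · rw [QL_cons_false]
        refine ⟨x + 3, u + 3, v + 3, y + 3, ?_, ?_, ?_, ?_⟩
        · simpa using NEdge_shift (d₁ := [true, true, false]) e1
        · simpa using NEdge_shift (d₁ := [true, true, false]) e2
        · simpa using NEdge_shift (d₁ := [true, true, false]) e3
        · have := lvlN_append_right [true, true, false] (QL bs) u
          simp only [List.length_cons, List.length_nil] at this
          rw [Nat.add_comm u 3] at *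
          rw [this, hlvl]
          have : lvlN [true, true, false] 3 = 1 := by simp [lvlN]
          rw [this]; push_cast; ring
      · rw [QL_cons_true]
        refine ⟨x + 1, u + 1, v + 1, y + 1, ?_, ?_, ?_, ?_⟩
        · simpa using NEdge_shift (d₁ := [true]) e1
        · simpa using NEdge_shift (d₁ := [true]) e2
        · simpa using NEdge_shift (d₁ := [true]) e3
        · have := lvlN_append_right [true] (QL bs) u
          simp only [List.length_cons, List.length_nil] at this
          rw [Nat.add_comm u 1] at *
          rw [this, hlvl]
          have : lvlN [true] 1 = 1 := by simp [lvlN]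
          rw [this]; push_cast; ring

lemma NEdge_pre3 {a b : ℕ} (h : NEdge [true, true, false] a b) :
    (a = 0 ∧ b = 1) ∨ (a = 1 ∧ b = 2) ∨ (a = 3 ∧ b = 2) := by
  obtain ⟨i, hi, hc⟩ := h
  simp only [List.length_cons, List.length_nil] at hi
  interval_cases i <;> rcases hc with ⟨hd, rfl, rfl⟩ | ⟨hd, rfl, rfl⟩ <;> simp_all

lemma NEdge_pre1 {a b : ℕ} (h : NEdge [true] a b) : a = 0 ∧ b = 1 := by
  obtain ⟨i, hi, hc⟩ := h
  simp only [List.length_cons, List.length_nil] at hi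
  interval_cases i <;> rcases hc with ⟨hd, rfl, rfl⟩ | ⟨hd, rfl, rfl⟩ <;> simp_all

lemma lvlN_app3 (d : List Bool) (j : ℕ) :
    lvlN ([true, true, false] ++ d) (3 + j) = 1 + lvlN d j := by
  have := lvlN_append_right [true, true, false] d j
  simp only [List.length_cons, List.length_nil] at this
  rw [this]
  have h1 : lvlN [true, true, false] 3 = 1 := by simp [lvlN]
  rw [h1]

lemma lvlN_app1 (d : List Bool) (j : ℕ) :
    lvlN ([true] ++ d) (1 + j) = 1 + lvlN d j := by
  have := lvlN_append_right [true] d j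
  simp only [List.length_cons, List.length_nil] at this
  rw [this]
  have h1 : lvlN [true] 1 = 1 := by simp [lvlN]
  rw [h1]

lemma len3 : ([true, true, false] : List Bool).length = 3 := rfl
lemma len1 : ([true] : List Bool).length = 1 := rfl

lemma lvl_pre3_vals : lvlN [true, true, false] 0 = 0 ∧ lvlN [true, true, false] 1 = 1 ∧
    lvlN [true, true, false] 2 = 2 ∧ lvlN [true, true, false] 3 = 1 := by decide

lemma lvl_pre1_vals : lvlN [true] 0 = 0 ∧ lvlN [true] 1 = 1 := by decide

lemma no_three_path : ∀ (bs : List Bool) (l : ℕ), bs.getD l false = false →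
    ∀ x p q y : ℕ, NEdge (QL bs) x p → NEdge (QL bs) p q → NEdge (QL bs) q y →
      lvlN (QL bs) p = (l : ℤ) + 1 → False := by
  intro bs
  induction bs with
  | nil =>
    intro l _ x p q y e1 e2 e3 _
    have hQ : QL [] = [true, true] := rfl
    have hg : ∀ i < 2, ([true, true] : List Bool).getD i true = true := by decide
    rw [hQ] at e2 e3
    obtain ⟨i, hi, hc⟩ := e2
    simp only [List.length_cons, List.length_nil] at hi
    rcases hc with ⟨_, hp, hq⟩ | ⟨hd, _, _⟩
    · obtain ⟨j, hj, hc3⟩ := e3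
      simp only [List.length_cons, List.length_nil] at hj
      rcases hc3 with ⟨_, h1, _⟩ | ⟨hd, _, _⟩
      · have hp0 : p = 0 := by omega
        subst hp0
        exact NEdge_to_zero (bs := []) e1
      · rw [hg j (by omega)] at hd; simp at hd
    · rw [hg i (by omega)] at hd; simp at hd
  | cons b bs ih =>
    intro l hl x p q y e1 e2 e3 hlvl
    match l with
    | 0 =>
      have hb : b = false := by simpa using hl
      subst hb
      rw [QL_cons_false] at e1 e2 e3 hlvl
      have hp13 : p = 1 ∨ p = 3 := by
        by_cases hp : p ≤ 3
        · rw [lvlN_append_left (by rw [len3]; exact hp)] at hlvl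
          obtain ⟨v0, v1, v2, v3⟩ := lvl_pre3_vals
          interval_cases p <;> simp_all
        · exfalso
          obtain ⟨p', rfl⟩ : ∃ p', p = 3 + p' := ⟨p - 3, by omega⟩
          rw [lvlN_app3] at hlvl
          have := QL_lvl_pos bs (i := p') (by omega)
          simp only [Nat.cast_zero] at hlvl
          omega
      rcases hp13 with rfl | rfl
      · -- p = 1 : then q = 2, and q has no outgoing edge
        have hq2 : q = 2 := by
          rcases NEdge_append.1 e2 with hpre | ⟨a', b', he', ha, hb⟩
          · rcases NEdge_pre3 hpre with ⟨h, h'⟩ | ⟨h, h'⟩ | ⟨h, h'⟩ <;> omega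
          · rw [len3] at ha; omega
        subst hq2
        rcases NEdge_append.1 e3 with hpre | ⟨a', b', he', ha, hb⟩
        · rcases NEdge_pre3 hpre with ⟨h, _⟩ | ⟨h, _⟩ | ⟨h, _⟩ <;> omega
        · rw [len3] at ha; omega
      · -- p = 3 : no incoming edge
        rcases NEdge_append.1 e1 with hpre | ⟨a', b', he', ha, hb⟩
        · rcases NEdge_pre3 hpre with ⟨_, h⟩ | ⟨_, h⟩ | ⟨_, h⟩ <;> omega
        · rw [len3] at hb
          have : b' = 0 := by omega
          subst this
          exact NEdge_to_zero he'
    | l + 1 =>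
      have hl' : bs.getD l false = false := by simpa using hl
      push_cast at hlvl
      rcases b with _ | _
      · rw [QL_cons_false] at e1 e2 e3 hlvl
        obtain ⟨p₂, q₂, he₂, rfl, rfl⟩ :
            ∃ p₂ q₂, NEdge (QL bs) p₂ q₂ ∧ p = p₂ + 3 ∧ q = q₂ + 3 := by
          rcases NEdge_append.1 e2 with hpre | ⟨a', b', he', ha, hb⟩
          · exfalso
            have hple : p ≤ 3 := by
              rcases NEdge_pre3 hpre with ⟨h, _⟩ | ⟨h, _⟩ | ⟨h, _⟩ <;> omega
            rw [lvlN_append_left (by rw [len3]; exact hple)] at hlvl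
            obtain ⟨v0, v1, v2, v3⟩ := lvl_pre3_vals
            rcases NEdge_pre3 hpre with ⟨h, _⟩ | ⟨h, _⟩ | ⟨h, _⟩ <;> subst h <;>
              simp_all <;> omega
          · rw [len3] at ha hb
            exact ⟨a', b', he', by omega, by omega⟩
        have hq₂ : 1 ≤ q₂ := by
          rcases Nat.eq_zero_or_pos q₂ with rfl | h
          · exact absurd he₂ (fun h => NEdge_to_zero h)
          · omega
        obtain ⟨x₂, he₁⟩ : ∃ x₂, NEdge (QL bs) x₂ p₂ := by
          rcases NEdge_append.1 e1 with hpre | ⟨a', b', he', ha, hb⟩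
          · exfalso
            rcases NEdge_pre3 hpre with ⟨_, h⟩ | ⟨_, h⟩ | ⟨_, h⟩ <;> omega
          · rw [len3] at ha hb
            have h : b' = p₂ := by omega
            exact ⟨a', h ▸ he'⟩
        obtain ⟨y₂, he₃⟩ : ∃ y₂, NEdge (QL bs) q₂ y₂ := by
          rcases NEdge_append.1 e3 with hpre | ⟨a', b', he', ha, hb⟩
          · exfalso
            rcases NEdge_pre3 hpre with ⟨h, _⟩ | ⟨h, _⟩ | ⟨h, _⟩ <;> omega
          · rw [len3] at ha hb
            have h : a' = q₂ := by omega
            exact ⟨b', h ▸ he'⟩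
        rw [show p₂ + 3 = 3 + p₂ by omega, lvlN_app3] at hlvl
        exact ih l hl' x₂ p₂ q₂ y₂ he₁ he₂ he₃ (by omega)
      · rw [QL_cons_true] at e1 e2 e3 hlvl
        obtain ⟨p₂, q₂, he₂, rfl, rfl⟩ :
            ∃ p₂ q₂, NEdge (QL bs) p₂ q₂ ∧ p = p₂ + 1 ∧ q = q₂ + 1 := by
          rcases NEdge_append.1 e2 with hpre | ⟨a', b', he', ha, hb⟩
          · exfalso
            obtain ⟨h, _⟩ := NEdge_pre1 hpre
            subst h
            rw [lvlN_zero] at hlvl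
            omega
          · rw [len1] at ha hb
            exact ⟨a', b', he', by omega, by omega⟩
        obtain ⟨x₂, he₁⟩ : ∃ x₂, NEdge (QL bs) x₂ p₂ := by
          rcases NEdge_append.1 e1 with hpre | ⟨a', b', he', ha, hb⟩
          · exfalso
            obtain ⟨_, h⟩ := NEdge_pre1 hpre
            have hp0 : p₂ = 0 := by omega
            subst hp0
            rw [show 0 + 1 = 1 + 0 by rfl, lvlN_app1, lvlN_zero] at hlvl
            omega
          · rw [len1] at ha hb
            have h : b' = p₂ := by omega
            exact ⟨a', h ▸ he'⟩
        obtain ⟨y₂, he₃⟩ : ∃ y₂, NEdge (QL bs) q₂ y₂ := by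
          rcases NEdge_append.1 e3 with hpre | ⟨a', b', he', ha, hb⟩
          · exfalso
            obtain ⟨h, _⟩ := NEdge_pre1 hpre
            omega
          · rw [len1] at ha hb
            have h : a' = q₂ := by omega
            exact ⟨b', h ▸ he'⟩
        rw [show p₂ + 1 = 1 + p₂ by omega, lvlN_app1] at hlvl
        exact ih l hl' x₂ p₂ q₂ y₂ he₁ he₂ he₃ (by omega)

lemma pathEdge_iff_NEdge (ds : List Bool) (a b : Fin (ds.length + 1)) :
    pathEdge ds a b ↔ NEdge ds a.val b.val := by
  constructor
  · rintro ⟨i, hc⟩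
    refine ⟨i.val, i.isLt, ?_⟩
    rw [List.getD_eq_getElem ds true i.isLt]
    split at hc
    · exact Or.inl ⟨by simpa [List.get_eq_getElem] using ‹_›, by rw [hc.1]; rfl, by rw [hc.2]; rfl⟩
    · refine Or.inr ⟨?_, by rw [hc.1]; rfl, by rw [hc.2]; rfl⟩
      simpa [List.get_eq_getElem] using Bool.eq_false_iff.2 ‹_›
  · rintro ⟨i, hi, ⟨hd, ha, hb⟩ | ⟨hd, ha, hb⟩⟩ <;>
      rw [List.getD_eq_getElem ds true hi] at hd
    · refine ⟨⟨i, hi⟩, ?_⟩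
      rw [if_pos (by simpa [List.get_eq_getElem] using hd)]
      exact ⟨Fin.ext ha, Fin.ext hb⟩
    · refine ⟨⟨i, hi⟩, ?_⟩
      rw [if_neg (by simp [List.get_eq_getElem, hd])]
      exact ⟨Fin.ext ha, Fin.ext hb⟩

lemma lvl_pres {ds ds' : List Bool} (h : Fin (ds.length + 1) → Fin (ds'.length + 1))
    (hom : IsDigraphHom (pathEdge ds) (pathEdge ds') h) (h0 : h 0 = 0) :
    ∀ i : Fin (ds.length + 1), lvlN ds' (h i).val = lvlN ds i.val := by
  suffices H : ∀ j (hj : j < ds.length + 1), lvlN ds' (h ⟨j, hj⟩).val = lvlN ds j by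
    intro i; have := H i.val i.isLt; simpa using this
  intro j
  induction j with
  | zero =>
    intro hj
    have : (⟨0, hj⟩ : Fin (ds.length + 1)) = 0 := rfl
    rw [this, h0]
    simp [lvlN_zero]
  | succ j ihj =>
    intro hj
    have hjlen : j < ds.length := by omega
    rcases hd : ds.getD j true with _ | _
    · -- false : edge from j+1 to j
      have hsrc : NEdge ds (j + 1) j := ⟨j, hjlen, Or.inr ⟨hd, rfl, rfl⟩⟩
      have hpe : pathEdge ds ⟨j + 1, hj⟩ ⟨j, by omega⟩ := (pathEdge_iff_NEdge _ _ _).2 hsrc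
      have himg : NEdge ds' (h ⟨j + 1, hj⟩).val (h ⟨j, by omega⟩).val :=
        (pathEdge_iff_NEdge _ _ _).1 (hom _ _ hpe)
      have h1 := NEdge_lvl himg
      have h2 := NEdge_lvl hsrc
      have h3 := ihj (by omega)
      omega
    · have hsrc : NEdge ds j (j + 1) := ⟨j, hjlen, Or.inl ⟨hd, rfl, rfl⟩⟩
      have hpe : pathEdge ds ⟨j, by omega⟩ ⟨j + 1, hj⟩ := (pathEdge_iff_NEdge _ _ _).2 hsrc
      have himg : NEdge ds' (h ⟨j, by omega⟩).val (h ⟨j + 1, hj⟩).val :=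
        (pathEdge_iff_NEdge _ _ _).1 (hom _ _ hpe)
      have h1 := NEdge_lvl himg
      have h2 := NEdge_lvl hsrc
      have h3 := ihj (by omega)
      omega

lemma pre3_e1 : NEdge [true, true, false] 0 1 := ⟨0, by norm_num, Or.inl ⟨rfl, rfl, rfl⟩⟩
lemma pre3_e2 : NEdge [true, true, false] 1 2 := ⟨1, by norm_num, Or.inl ⟨rfl, rfl, rfl⟩⟩
lemma pre3_e3 : NEdge [true, true, false] 3 2 := ⟨2, by norm_num, Or.inr ⟨rfl, rfl, rfl⟩⟩
lemma pre1_e : NEdge [true] 0 1 := ⟨0, by norm_num, Or.inl ⟨rfl, rfl, rfl⟩⟩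

lemma QL_e0 (bs : List Bool) : NEdge (QL bs) 0 1 :=
  ⟨0, by have := QL_two_le bs; omega, Or.inl ⟨QL_getD_zero bs, rfl, rfl⟩⟩

lemma hom_exists : ∀ {bs bs' : List Bool}, List.Forall₂ (· ≤ ·) bs bs' →
    ∃ g : ℕ → ℕ, g 0 = 0 ∧ g (QL bs).length = (QL bs').length ∧
      (∀ a, a ≤ (QL bs).length → g a ≤ (QL bs').length) ∧
      (∀ a b, NEdge (QL bs) a b → NEdge (QL bs') (g a) (g b)) := by
  intro bs bs' hF
  induction hF with
  | nil => exact ⟨id, rfl, rfl, fun a ha => ha, fun a b h => h⟩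
  | @cons b b' bs bs' hbb hF ih =>
    obtain ⟨g, hg0, hglen, hgbd, hge⟩ := ih
    have hL := QL_two_le bs
    have hL' := QL_two_le bs'
    rcases b with _ | _ <;> rcases b' with _ | _
    · -- false, false
      have hs : (QL (false :: bs)).length = 3 + (QL bs).length := by
        rw [QL_cons_false, List.length_append, len3]
      have ht : (QL (false :: bs')).length = 3 + (QL bs').length := by
        rw [QL_cons_false, List.length_append, len3]
      refine ⟨fun a => if a < 3 then a else g (a - 3) + 3, by norm_num, ?_, ?_, ?_⟩
      · rw [hs, ht]
        simp only
        rw [if_neg (by omega), Nat.add_sub_cancel_left, hglen]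
        omega
      · intro a ha
        rw [hs] at ha
        rw [ht]
        simp only
        split_ifs with h
        · omega
        · have := hgbd (a - 3) (by omega)
          omega
      · intro a c h
        rw [QL_cons_false] at h ⊢
        simp only
        rcases NEdge_append.1 h with hpre | ⟨a', c', he', ha, hc⟩
        · rcases NEdge_pre3 hpre with ⟨rfl, rfl⟩ | ⟨rfl, rfl⟩ | ⟨rfl, rfl⟩
          · rw [if_pos (by omega), if_pos (by omega)]
            exact NEdge_append.2 (Or.inl pre3_e1)
          · rw [if_pos (by omega), if_pos (by omega)]
            exact NEdge_append.2 (Or.inl pre3_e2)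
          · rw [if_neg (by omega), if_pos (by omega)]
            norm_num [hg0]
            exact NEdge_append.2 (Or.inl pre3_e3)
        · rw [len3] at ha hc
          subst ha hc
          rw [if_neg (by omega), if_neg (by omega), Nat.add_sub_cancel, Nat.add_sub_cancel]
          have := NEdge_shift (d₁ := [true, true, false]) (hge _ _ he')
          rwa [len3] at this
    · -- false, true
      have hs : (QL (false :: bs)).length = 3 + (QL bs).length := by
        rw [QL_cons_false, List.length_append, len3]
      have ht : (QL (true :: bs')).length = 1 + (QL bs').length := by
        rw [QL_cons_true, List.length_append, len1]
      have key : NEdge ([true] ++ QL bs') 1 (g 1 + 1) := by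
        have h1 := hge 0 1 (QL_e0 bs)
        rw [hg0] at h1
        have := NEdge_shift (d₁ := [true]) h1
        rwa [len1, Nat.zero_add] at this
      refine ⟨fun a => if a = 0 then 0 else if a = 1 then 1 else if a = 2 then g 1 + 1
        else g (a - 3) + 1, by norm_num, ?_, ?_, ?_⟩
      · rw [hs, ht]
        simp only
        rw [if_neg (by omega), if_neg (by omega), if_neg (by omega),
          Nat.add_sub_cancel_left, hglen]
        omega
      · intro a ha
        rw [hs] at ha
        rw [ht]
        simp only
        have hb1 := hgbd 1 (by omega)
        split_ifs with h1 h2 h3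
        · omega
        · omega
        · omega
        · have := hgbd (a - 3) (by omega)
          omega
      · intro a c h
        rw [QL_cons_false] at h
        rw [QL_cons_true]
        simp only
        rcases NEdge_append.1 h with hpre | ⟨a', c', he', ha, hc⟩
        · rcases NEdge_pre3 hpre with ⟨rfl, rfl⟩ | ⟨rfl, rfl⟩ | ⟨rfl, rfl⟩
          · rw [if_pos rfl, if_neg (by omega), if_pos rfl]
            exact NEdge_append.2 (Or.inl pre1_e)
          · rw [if_neg (by omega), if_pos rfl, if_neg (by omega), if_neg (by omega),
              if_pos rfl]
            exact key
          · rw [if_neg (by omega), if_neg (by omega), if_neg (by omega),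
              if_neg (by omega), if_neg (by omega), if_pos rfl]
            rw [show (3:ℕ) - 3 = 0 from rfl, hg0, show (0:ℕ) + 1 = 1 from rfl]
            exact key
        · rw [len3] at ha hc
          subst ha hc
          rw [if_neg (by omega), if_neg (by omega), if_neg (by omega),
            if_neg (by omega), if_neg (by omega), if_neg (by omega),
            Nat.add_sub_cancel, Nat.add_sub_cancel]
          have := NEdge_shift (d₁ := [true]) (hge _ _ he')
          rwa [len1] at this
    · -- true, false : impossible
      exact absurd hbb (by decide)
    · -- true, true
      have hs : (QL (true :: bs)).length = 1 + (QL bs).length := by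
        rw [QL_cons_true, List.length_append, len1]
      have ht : (QL (true :: bs')).length = 1 + (QL bs').length := by
        rw [QL_cons_true, List.length_append, len1]
      refine ⟨fun a => if a = 0 then 0 else g (a - 1) + 1, by norm_num, ?_, ?_, ?_⟩
      · rw [hs, ht]
        simp only
        rw [if_neg (by omega), Nat.add_sub_cancel_left, hglen]
        omega
      · intro a ha
        rw [hs] at ha
        rw [ht]
        simp only
        split_ifs with h
        · omega
        · have := hgbd (a - 1) (by omega)
          omega
      · intro a c h
        rw [QL_cons_true] at h ⊢
        simp only
        rcases NEdge_append.1 h with hpre | ⟨a', c', he', ha, hc⟩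
        · obtain ⟨rfl, rfl⟩ := NEdge_pre1 hpre
          rw [if_pos rfl, if_neg (by omega)]
          norm_num [hg0]
          exact NEdge_append.2 (Or.inl pre1_e)
        · rw [len1] at ha hc
          subst ha hc
          rw [if_neg (by omega), if_neg (by omega), Nat.add_sub_cancel, Nat.add_sub_cancel]
          have := NEdge_shift (d₁ := [true]) (hge _ _ he')
          rwa [len1] at this

lemma QDirs_eq (n : ℕ) (S : Finset (Fin n)) :
    QDirs n S = QL ((List.finRange n).map fun l => decide (l ∈ S)) := by
  have h : ((List.finRange n).flatMap fun l => if l ∈ S then [true] else [true, false, true])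
      = (List.finRange n).flatMap fun l => blk (decide (l ∈ S)) :=
    by congr 1; funext l; by_cases hl : l ∈ S <;> simp [blk, hl]
  unfold QDirs QL
  rw [List.flatMap_map, ← h]

lemma listOf_getD {n : ℕ} (S : Finset (Fin n)) (l : Fin n) :
    (((List.finRange n).map fun k => decide (k ∈ S)).getD l.val false) = decide (l ∈ S) := by
  have hlt : l.val < ((List.finRange n).map fun k => decide (k ∈ S)).length := by simp
  rw [List.getD_eq_getElem _ _ hlt, List.getElem_map, List.getElem_finRange]
  congr 1

lemma forall₂_map {α : Type*} (L : List α) (f g : α → Bool) (h : ∀ x ∈ L, f x ≤ g x) :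
    List.Forall₂ (· ≤ ·) (L.map f) (L.map g) := by
  induction L with
  | nil => simp
  | cons a L ih =>
    simp only [List.map_cons]
    exact List.Forall₂.cons (h a (by simp)) (ih fun x hx => h x (by simp [hx]))

/-- there is a homomorphism `Q_S → Q_{S'}` sending the initial vertex to
the initial vertex and the terminal vertex to the terminal vertex iff `S ⊆ S'`. -/
theorem hom_QS_iff_subset (n : ℕ) (hn : 1 ≤ n) (S S' : Finset (Fin n)) :
    (∃ h : Fin ((QDirs n S).length + 1) → Fin ((QDirs n S').length + 1),
      IsDigraphHom (pathEdge (QDirs n S)) (pathEdge (QDirs n S')) h ∧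
      h 0 = 0 ∧ h (Fin.last _) = Fin.last _) ↔ S ⊆ S' := by
  have eS := QDirs_eq n S
  have eS' := QDirs_eq n S'
  constructor
  · rintro ⟨h, hom, h0, hlast⟩
    intro l hl
    by_contra hl'
    obtain ⟨x, u, v, y, e1, e2, e3, hlvl⟩ :=
      three_path_exists ((List.finRange n).map fun k => decide (k ∈ S)) l.val
        (by rw [listOf_getD]; exact decide_eq_true hl)
    rw [← eS] at e1 e2 e3 hlvl
    have hx := (NEdge_le e1).1
    have hu := (NEdge_le e1).2
    have hv := (NEdge_le e2).2
    have hy := (NEdge_le e3).2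
    have hx1 : x < (QDirs n S).length + 1 := by omega
    have hu1 : u < (QDirs n S).length + 1 := by omega
    have hv1 : v < (QDirs n S).length + 1 := by omega
    have hy1 : y < (QDirs n S).length + 1 := by omega
    have pe1 : pathEdge (QDirs n S) ⟨x, hx1⟩ ⟨u, hu1⟩ := (pathEdge_iff_NEdge _ _ _).2 e1
    have pe2 : pathEdge (QDirs n S) ⟨u, hu1⟩ ⟨v, hv1⟩ := (pathEdge_iff_NEdge _ _ _).2 e2
    have pe3 : pathEdge (QDirs n S) ⟨v, hv1⟩ ⟨y, hy1⟩ := (pathEdge_iff_NEdge _ _ _).2 e3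
    obtain ⟨X, hX⟩ : ∃ a, (h ⟨x, hx1⟩).val = a := ⟨_, rfl⟩
    obtain ⟨U, hU⟩ : ∃ a, (h ⟨u, hu1⟩).val = a := ⟨_, rfl⟩
    obtain ⟨V, hV⟩ : ∃ a, (h ⟨v, hv1⟩).val = a := ⟨_, rfl⟩
    obtain ⟨Y, hY⟩ : ∃ a, (h ⟨y, hy1⟩).val = a := ⟨_, rfl⟩
    have ie1 := (pathEdge_iff_NEdge _ _ _).1 (hom _ _ pe1)
    have ie2 := (pathEdge_iff_NEdge _ _ _).1 (hom _ _ pe2)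
    have ie3 := (pathEdge_iff_NEdge _ _ _).1 (hom _ _ pe3)
    have hlvl2 : lvlN (QDirs n S') (h ⟨u, hu1⟩).val = (l.val : ℤ) + 1 := by
      rw [lvl_pres h hom h0 ⟨u, hu1⟩]; exact hlvl
    rw [hX, hU] at ie1
    rw [hU, hV] at ie2
    rw [hV, hY] at ie3
    rw [hU] at hlvl2
    rw [eS'] at ie1 ie2 ie3 hlvl2
    exact no_three_path ((List.finRange n).map fun k => decide (k ∈ S')) l.val
      (by rw [listOf_getD]; exact decide_eq_false hl') _ _ _ _ ie1 ie2 ie3 hlvl2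
  · intro hsub
    obtain ⟨g, hg0, hglen, hgbd, hge⟩ := hom_exists
      (forall₂_map (List.finRange n) (fun k => decide (k ∈ S)) (fun k => decide (k ∈ S'))
        (fun x _ => by
          by_cases hx : x ∈ S
          · simp [hx, hsub hx]
          · simp [hx]))
    rw [← eS] at hglen hgbd hge
    rw [← eS'] at hglen hgbd hge
    refine ⟨fun i => ⟨g i.val, Nat.lt_succ_iff.mpr (hgbd _ (Nat.lt_succ_iff.mp i.isLt))⟩,
      ?_, ?_, ?_⟩
    · intro a b hab
      rw [pathEdge_iff_NEdge] at hab ⊢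
      exact hge _ _ hab
    · exact Fin.ext (by simpa using hg0)
    · exact Fin.ext (by simpa using hglen)
end

section
/- Let D be a finite set, R ⊆ D^n a nonempty n-ary relation, 𝒟 = 𝒟(R) the digraph constructed from R (balanced with level function lvl), and k ≥ 1. If a weakly connected component Δ' of the direct power 𝒟^k contains a tuple (c₁,…,c_k) with lvl(c₁) = … = lvl(c_k), then every tuple (d₁,…,d_k) in Δ' satisfies lvl(d₁) = … = lvl(d_k), and moreover either Δ' = Δ_k (the component of the diagonal) or Δ' consists of a single vertex. -/
open scoped NNRat

/-- Weak reachability (connectivity by oriented paths) in a digraph. -/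
def WeakReach {V : Type*} (E : V → V → Prop) : V → V → Prop :=
  Relation.ReflTransGen fun a b => E a b ∨ E b a

/-- Edge relation of the direct power of a digraph. -/
def powEdge {V : Type*} (k : ℕ) (E : V → V → Prop) :
    (Fin k → V) → (Fin k → V) → Prop :=
  fun c d => ∀ i, E (c i) (d i)

/-- The directions of the path `Q_{{i : d = r i}}` replacing the edge `(d, r)`. -/
def pathDirs {D : Type} [DecidableEq D] {n : ℕ} (d : D) (r : Fin n → D) : List Bool :=
  QDirs n (Finset.univ.filter fun i => d = r i)

/-- Internal vertices of the copies of the paths `Q_{{i : d = r i}}` in `𝒟(R)`. -/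
structure InnerVert (D : Type) [DecidableEq D] (n : ℕ) (R : Set (Fin n → D)) where
  d : D
  r : Fin n → D
  hr : r ∈ R
  j : ℕ
  hj0 : 0 < j
  hjlen : j < (pathDirs d r).length

/-- The vertex set of the digraph `𝒟(R)`: base vertices `D`, top vertices `R`, and
the internal vertices of the connecting oriented paths. -/
def DVert (D : Type) [DecidableEq D] (n : ℕ) (R : Set (Fin n → D)) : Type :=
  D ⊕ ({t : Fin n → D // t ∈ R} ⊕ InnerVert D n R)

/-- The `j`-th vertex of the copy of the path `Q_{{i : d = t i}}` joining `d` to `t`. -/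
def pathVert {D : Type} [DecidableEq D] {n : ℕ} {R : Set (Fin n → D)}
    (d : D) (t : Fin n → D) (ht : t ∈ R) (j : ℕ) : DVert D n R :=
  if hj0 : j = 0 then Sum.inl d
  else if hjl : (pathDirs d t).length ≤ j then Sum.inr (Sum.inl ⟨t, ht⟩)
  else Sum.inr (Sum.inr ⟨d, t, ht, j, Nat.pos_of_ne_zero hj0, not_le.mp hjl⟩)

/-- The edge relation of the digraph `𝒟(R)`. -/
def DEdge {D : Type} [DecidableEq D] {n : ℕ} {R : Set (Fin n → D)} :
    DVert D n R → DVert D n R → Prop :=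
  fun a b => ∃ (d : D) (t : Fin n → D) (ht : t ∈ R) (i : ℕ)
      (hi : i < (pathDirs d t).length),
    if (pathDirs d t).get ⟨i, hi⟩ = true then
      a = pathVert d t ht i ∧ b = pathVert d t ht (i + 1)
    else
      a = pathVert d t ht (i + 1) ∧ b = pathVert d t ht i

/-- A unary polymorphism of an `n`-ary relation `R`. -/
def IsUnaryPolymorphism {D : Type} {n : ℕ} (R : Set (Fin n → D)) (g : D → D) : Prop :=
  ∀ t ∈ R, (fun i => g (t i)) ∈ R

/-- The unary cost function `u` on the vertices of `𝒟(R)` associated to `ρ : R → ℚ≥0`. -/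
def uFun {D : Type} [DecidableEq D] {n : ℕ} {R : Set (Fin n → D)}
    (ρ : {t : Fin n → D // t ∈ R} → ℚ≥0) : DVert D n R → ℚ≥0 :=
  fun v => match v with
  | Sum.inl _ => 0
  | Sum.inr (Sum.inl t) => ρ t
  | Sum.inr (Sum.inr _) => 0

namespace Stmt9

variable {V : Type*} {E : V → V → Prop}

/-- One move in direction `dir`: `true` = along an edge, `false` = against one. -/
def Move (E : V → V → Prop) (dir : Bool) (a b : V) : Prop := if dir then E a b else E b a

/-- A walk following the direction word `w`. -/
def DWalk (E : V → V → Prop) : List Bool → V → V → Prop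
  | [], a, b => a = b
  | dir :: w, a, b => ∃ x, Move E dir a x ∧ DWalk E w x b

lemma DWalk.nil (a : V) : DWalk E [] a a := rfl

lemma DWalk.append {w₁ w₂ : List Bool} {a b c : V} (h1 : DWalk E w₁ a b)
    (h2 : DWalk E w₂ b c) : DWalk E (w₁ ++ w₂) a c := by
  induction w₁ generalizing a with
  | nil => simp only [DWalk] at h1; subst h1; simpa using h2
  | cons d w ih =>
      obtain ⟨x, hm, hw⟩ := h1
      exact ⟨x, hm, ih hw⟩

lemma Move.symmDir {d : Bool} {a b : V} (h : Move E d a b) : Move E (!d) b a := by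
  cases d <;> simpa [Move] using h

lemma DWalk.single {d : Bool} {a b : V} (h : Move E d a b) : DWalk E [d] a b :=
  ⟨b, h, rfl⟩

lemma DWalk.revNot {w : List Bool} {a b : V} (h : DWalk E w a b) :
    DWalk E ((w.map not).reverse) b a := by
  induction w generalizing a with
  | nil => simp only [DWalk] at h; subst h; simp [DWalk.nil]
  | cons d w ih =>
      obtain ⟨x, hm, hw⟩ := h
      have := (ih hw).append (DWalk.single hm.symmDir)
      simpa using this

lemma DWalk.weakReach {w : List Bool} {a b : V} (h : DWalk E w a b) : WeakReach E a b := by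
  induction w generalizing a with
  | nil => simp only [DWalk] at h; subst h; exact Relation.ReflTransGen.refl
  | cons d w ih =>
      obtain ⟨x, hm, hw⟩ := h
      refine Relation.ReflTransGen.head ?_ (ih hw)
      cases d
      · exact Or.inr hm
      · exact Or.inl hm

lemma weakReach_symm {a b : V} (h : WeakReach E a b) : WeakReach E b a := by
  induction h with
  | refl => exact Relation.ReflTransGen.refl
  | tail hst h ih => exact Relation.ReflTransGen.head h.symm ih

lemma DWalk.pow {k : ℕ} {w : List Bool} {c t : Fin k → V}
    (h : ∀ i, DWalk E w (c i) (t i)) : DWalk (powEdge k E) w c t := by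
  induction w generalizing c with
  | nil => simp only [DWalk] at h ⊢; funext i; exact h i
  | cons d w ih =>
      choose x hm hw using h
      refine ⟨x, ?_, ih hw⟩
      cases d
      · exact fun i => by simpa [Move] using hm i
      · exact fun i => by simpa [Move] using hm i


/-! ### Blocks and direction words -/

def block (b : Bool) : List Bool := if b then [true] else [true, false, true]

def blockDirs (L : List Bool) : List Bool := L.flatMap block

def ascW (m : ℕ) : List Bool := (List.replicate m [true, false, true]).flatten

def descW (m : ℕ) : List Bool := (List.replicate m [false, true, false]).flatten

lemma blockDirs_cons (b : Bool) (L : List Bool) :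
    blockDirs (b :: L) = block b ++ blockDirs L := rfl

lemma blockDirs_append (L₁ L₂ : List Bool) :
    blockDirs (L₁ ++ L₂) = blockDirs L₁ ++ blockDirs L₂ :=
  List.flatMap_append

lemma ascW_succ (m : ℕ) : ascW (m + 1) = [true, false, true] ++ ascW m := by
  simp [ascW, List.replicate_succ]

lemma descW_succ (m : ℕ) : descW (m + 1) = [false, true, false] ++ descW m := by
  simp [descW, List.replicate_succ]

lemma descW_succ' (m : ℕ) : descW (m + 1) = descW m ++ [false, true, false] := by
  simp [descW, List.replicate_succ']

lemma revNot_ascW (m : ℕ) : ((ascW m).map not).reverse = descW m := by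
  induction m with
  | zero => simp [ascW, descW]
  | succ m ih => simp [ascW_succ, descW_succ' m, ← ih]

def hgt (w : List Bool) : ℤ := (w.map fun b => if b then (1 : ℤ) else -1).sum

lemma hgt_nil : hgt [] = 0 := rfl

lemma hgt_append (w₁ w₂ : List Bool) : hgt (w₁ ++ w₂) = hgt w₁ + hgt w₂ := by
  simp [hgt]

lemma hgt_blockDirs (L : List Bool) : hgt (blockDirs L) = L.length := by
  induction L with
  | nil => simp [blockDirs, hgt]
  | cons b L ih =>
      rw [blockDirs_cons, hgt_append, ih]
      cases b <;> simp [block, hgt] <;> ring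

lemma getD_of_split {ds pre rest : List Bool} (h : ds = pre ++ rest) (i : ℕ)
    (hi : i < rest.length) : ds.getD (pre.length + i) true = rest.getD i true := by
  subst h
  simp [List.getD_eq_getElem?_getD,
    List.getElem?_append_right (by omega : pre.length ≤ pre.length + i)]

lemma length_of_split {ds pre rest : List Bool} (h : ds = pre ++ rest) :
    ds.length = pre.length + rest.length := by subst h; simp

/-! ### Ascending through blocks -/

lemma asc_core (pv : ℕ → V) (ds : List Bool)
    (hstep : ∀ j, j < ds.length → Move E (ds.getD j true) (pv j) (pv (j + 1))) :
    ∀ (L : List Bool) (pre post : List Bool), ds = pre ++ (blockDirs L ++ post) →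
      DWalk E (ascW L.length) (pv pre.length) (pv (pre.length + (blockDirs L).length)) := by
  intro L
  induction L with
  | nil =>
      intro pre post h
      simpa [ascW, blockDirs] using DWalk.nil (E := E) (pv pre.length)
  | cons b L ih =>
      intro pre post h
      set a := pre.length with ha
      have hlen := length_of_split h
      rw [List.length_append] at hlen
      cases b with
      | true =>
          have hbl : (blockDirs (true :: L)).length = (blockDirs L).length + 1 := by
            simp [blockDirs_cons, block]
          have h' : ds = (pre ++ [true]) ++ (blockDirs L ++ post) := by
            simpa [blockDirs_cons, block] using h
          have hd : ds.getD (a + 0) true = true := by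
            have := getD_of_split h 0 (by simp [blockDirs_cons, block])
            simpa [blockDirs_cons, block] using this
          have ha' : a < ds.length := by omega
          have s0 : Move E true (pv a) (pv (a + 1)) := by
            have := hstep a ha'
            rwa [show a = a + 0 by ring, hd] at this
          have w3 : DWalk E [true, false, true] (pv a) (pv (a + 1)) :=
            ⟨pv (a + 1), s0, pv a, s0.symmDir, pv (a + 1), s0, rfl⟩
          have wrest : DWalk E (ascW L.length) (pv (a + 1)) (pv (a + 1 + (blockDirs L).length)) := by
            simpa using ih (pre ++ [true]) post h'
          have hend : a + (blockDirs (true :: L)).length = a + 1 + (blockDirs L).length := by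
            omega
          rw [List.length_cons, ascW_succ, hend]
          exact w3.append wrest
      | false =>
          have hbl : (blockDirs (false :: L)).length = (blockDirs L).length + 3 := by
            simp [blockDirs_cons, block] <;> omega
          have h' : ds = (pre ++ [true, false, true]) ++ (blockDirs L ++ post) := by
            simpa [blockDirs_cons, block] using h
          have hd0 : ds.getD (a + 0) true = true := by
            have := getD_of_split h 0 (by simp [blockDirs_cons, block])
            simpa [blockDirs_cons, block] using this
          have hd1 : ds.getD (a + 1) true = false := by
            have := getD_of_split h 1 (by simp [blockDirs_cons, block])
            simpa [blockDirs_cons, block] using this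
          have hd2 : ds.getD (a + 2) true = true := by
            have := getD_of_split h 2 (by simp [blockDirs_cons, block])
            simpa [blockDirs_cons, block] using this
          have s0 : Move E true (pv a) (pv (a + 1)) := by
            have := hstep a (by omega)
            rwa [show a = a + 0 by ring, hd0] at this
          have s1 : Move E false (pv (a + 1)) (pv (a + 2)) := by
            have := hstep (a + 1) (by omega)
            rwa [hd1] at this
          have s2 : Move E true (pv (a + 2)) (pv (a + 3)) := by
            have := hstep (a + 2) (by omega)
            rwa [hd2] at this
          have w3 : DWalk E [true, false, true] (pv a) (pv (a + 3)) :=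
            ⟨pv (a + 1), s0, pv (a + 2), s1, pv (a + 3), s2, rfl⟩
          have wrest : DWalk E (ascW L.length) (pv (a + 3)) (pv (a + 3 + (blockDirs L).length)) := by
            simpa using ih (pre ++ [true, false, true]) post h'
          have hend : a + (blockDirs (false :: L)).length = a + 3 + (blockDirs L).length := by
            omega
          rw [List.length_cons, ascW_succ, hend]
          exact w3.append wrest

/-! ### Position characterisation -/

lemma char (L : List Bool) : ∀ j, j ≤ (blockDirs L).length →
    ∃ L₁ L₂, L = L₁ ++ L₂ ∧
      (j = (blockDirs L₁).length ∨
       ∃ L₂', L₂ = false :: L₂' ∧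
         (j = (blockDirs L₁).length + 1 ∨ j = (blockDirs L₁).length + 2)) := by
  induction L with
  | nil =>
      intro j hj
      refine ⟨[], [], rfl, Or.inl ?_⟩
      simpa [blockDirs] using Nat.le_zero.mp (by simpa [blockDirs] using hj)
  | cons b L ih =>
      intro j hj
      rcases Nat.eq_zero_or_pos j with h0 | hpos
      · exact ⟨[], b :: L, rfl, Or.inl (by simp [blockDirs, h0])⟩
      cases b with
      | true =>
          obtain ⟨L₁, L₂, hL, hc⟩ := ih (j - 1)
            (by simp [blockDirs_cons, block] at hj; omega)
          refine ⟨true :: L₁, L₂, by simp [hL], ?_⟩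
          have hb : (blockDirs (true :: L₁)).length = (blockDirs L₁).length + 1 := by
            simp [blockDirs_cons, block] <;> omega
          rcases hc with hc | ⟨L₂', hL₂, hc⟩
          · exact Or.inl (by omega)
          · exact Or.inr ⟨L₂', hL₂, by omega⟩
      | false =>
          rcases Nat.lt_or_ge j 3 with hlt | hge
          · interval_cases j
            · exact ⟨[], false :: L, rfl, Or.inr ⟨L, rfl, Or.inl (by simp [blockDirs])⟩⟩
            · exact ⟨[], false :: L, rfl, Or.inr ⟨L, rfl, Or.inr (by simp [blockDirs])⟩⟩
          · obtain ⟨L₁, L₂, hL, hc⟩ := ih (j - 3)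
              (by simp [blockDirs_cons, block] at hj; omega)
            refine ⟨false :: L₁, L₂, by simp [hL], ?_⟩
            have hb : (blockDirs (false :: L₁)).length = (blockDirs L₁).length + 3 := by
              simp [blockDirs_cons, block] <;> omega
            rcases hc with hc | ⟨L₂', hL₂, hc⟩
            · exact Or.inl (by omega)
            · exact Or.inr ⟨L₂', hL₂, by omega⟩


/-! ### The paths of `𝒟(R)` -/

section DLayer

variable {D : Type} [DecidableEq D] {n : ℕ} {R : Set (Fin n → D)}

def pathBlocks (d : D) (t : Fin n → D) : List Bool :=
  true :: (((List.finRange n).map fun l => decide (d = t l)) ++ [true])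

lemma length_pathBlocks (d : D) (t : Fin n → D) : (pathBlocks d t).length = n + 2 := by
  simp [pathBlocks]

lemma pathDirs_eq (d : D) (t : Fin n → D) : pathDirs d t = blockDirs (pathBlocks d t) := by
  have hmid : ((List.finRange n).flatMap fun l =>
        if l ∈ Finset.univ.filter (fun i => d = t i) then [true] else [true, false, true])
      = (List.finRange n).flatMap fun a => block (decide (d = t a)) := by
    apply List.flatMap_congr
    intro l _
    by_cases h : d = t l <;> simp [h, block]
  simp only [pathDirs, QDirs, pathBlocks, blockDirs, List.flatMap_cons, List.flatMap_append,
    List.flatMap_map, Function.comp, hmid, block]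
  rfl

lemma move_pathVert (d : D) (t : Fin n → D) (ht : t ∈ R) :
    ∀ j, j < (pathDirs d t).length →
      Move (DEdge (R := R)) ((pathDirs d t).getD j true)
        (pathVert d t ht j) (pathVert d t ht (j + 1)) := by
  intro j hj
  rw [List.getD_eq_getElem _ _ hj]
  by_cases hb : (pathDirs d t)[j] = true
  · rw [hb]
    exact ⟨d, t, ht, j, hj, by
      rw [if_pos (by simpa [List.get_eq_getElem] using hb)]; exact ⟨rfl, rfl⟩⟩
  · rw [Bool.not_eq_true] at hb
    rw [hb]
    exact ⟨d, t, ht, j, hj, by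
      rw [if_neg (by simpa [List.get_eq_getElem] using hb)]; exact ⟨rfl, rfl⟩⟩

lemma pathVert_zero (d : D) (t : Fin n → D) (ht : t ∈ R) :
    pathVert d t ht 0 = Sum.inl d := by simp [pathVert]; rfl

lemma pathDirs_length_pos (d : D) (t : Fin n → D) : 0 < (pathDirs d t).length := by
  simp [pathDirs, QDirs]

lemma pathVert_top (d : D) (t : Fin n → D) (ht : t ∈ R) (j : ℕ)
    (hj : (pathDirs d t).length ≤ j) :
    pathVert d t ht j = Sum.inr (Sum.inl ⟨t, ht⟩) := by
  unfold pathVert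
  exact (dif_neg (by have := pathDirs_length_pos d t; omega)).trans (dif_pos hj)

lemma lvl_pathVert {lvl : DVert D n R → ℕ}
    (hlvl : ∀ a b, DEdge a b → lvl b = lvl a + 1)
    (d : D) (t : Fin n → D) (ht : t ∈ R) :
    ∀ j, j ≤ (pathDirs d t).length →
      (lvl (pathVert d t ht j) : ℤ) =
        (lvl (Sum.inl d) : ℤ) + hgt ((pathDirs d t).take j) := by
  intro j
  induction j with
  | zero => intro _; simp [pathVert_zero, hgt]
  | succ j ih =>
      intro hj
      have hj' : j < (pathDirs d t).length := by omega
      have step := move_pathVert d t ht j hj'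
      have htake : (pathDirs d t).take (j + 1) =
          (pathDirs d t).take j ++ [(pathDirs d t)[j]] := by
        rw [List.take_succ, List.getElem?_eq_getElem hj']
        rfl
      have ihe := ih (by omega)
      rw [List.getD_eq_getElem _ _ hj'] at step
      rcases hv : (pathDirs d t)[j] with _ | _
      · rw [hv] at step
        simp only [Move, Bool.false_eq_true, if_false] at step
        have h2 := hlvl _ _ step
        have h3 : hgt [false] = -1 := by simp [hgt]
        rw [htake, hgt_append, hv, h3]
        omega
      · rw [hv] at step
        simp only [Move, if_true] at step
        have h2 := hlvl _ _ step
        have h3 : hgt [true] = 1 := by simp [hgt]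
        rw [htake, hgt_append, hv, h3]
        omega

lemma hgt_pathDirs (d : D) (t : Fin n → D) : hgt (pathDirs d t) = (n : ℤ) + 2 := by
  rw [pathDirs_eq, hgt_blockDirs, length_pathBlocks]
  push_cast
  ring

lemma lvl_top {lvl : DVert D n R → ℕ}
    (hlvl : ∀ a b, DEdge a b → lvl b = lvl a + 1)
    (d : D) (t : Fin n → D) (ht : t ∈ R) :
    (lvl (Sum.inr (Sum.inl ⟨t, ht⟩) : DVert D n R) : ℤ) =
      (lvl (Sum.inl d) : ℤ) + (n + 2) := by
  have := lvl_pathVert hlvl d t ht (pathDirs d t).length le_rfl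
  rwa [List.take_length, hgt_pathDirs, pathVert_top d t ht _ le_rfl] at this

lemma lvl_base_eq {lvl : DVert D n R → ℕ}
    (hlvl : ∀ a b, DEdge a b → lvl b = lvl a + 1)
    (t : Fin n → D) (ht : t ∈ R) (d d' : D) :
    lvl (Sum.inl d : DVert D n R) = lvl (Sum.inl d') := by
  have h1 := lvl_top hlvl d t ht
  have h2 := lvl_top hlvl d' t ht
  omega


lemma len_pb (d : D) (t : Fin n → D) {L₁ L₂ : List Bool} (h : pathBlocks d t = L₁ ++ L₂) :
    (pathDirs d t).length = (blockDirs L₁).length + (blockDirs L₂).length := by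
  rw [pathDirs_eq, h, blockDirs_append, List.length_append]

lemma getD_pb (d : D) (t : Fin n → D) {L₁ L₂ : List Bool} (h : pathBlocks d t = L₁ ++ L₂)
    (i : ℕ) (hi : i < (blockDirs L₂).length) :
    (pathDirs d t).getD ((blockDirs L₁).length + i) true = (blockDirs L₂).getD i true :=
  getD_of_split (by rw [pathDirs_eq, h, blockDirs_append]) i hi

lemma asc_from (d : D) (t : Fin n → D) (ht : t ∈ R) {L₁ L₂ : List Bool}
    (h : pathBlocks d t = L₁ ++ L₂) :
    DWalk (DEdge (R := R)) (ascW L₂.length)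
      (pathVert d t ht (blockDirs L₁).length) (Sum.inr (Sum.inl ⟨t, ht⟩)) := by
  have hds : pathDirs d t = blockDirs L₁ ++ (blockDirs L₂ ++ []) := by
    rw [pathDirs_eq, h, blockDirs_append]; simp
  have hw := asc_core (pathVert d t ht) (pathDirs d t) (move_pathVert d t ht) L₂
    (blockDirs L₁) [] hds
  rwa [← len_pb d t h, pathVert_top d t ht _ le_rfl] at hw

lemma desc_from (d : D) (t : Fin n → D) (ht : t ∈ R) {L₁ L₂ : List Bool}
    (h : pathBlocks d t = L₁ ++ L₂) :
    DWalk (DEdge (R := R)) (descW L₁.length)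
      (pathVert d t ht (blockDirs L₁).length) (Sum.inl d) := by
  have hds : pathDirs d t = [] ++ (blockDirs L₁ ++ blockDirs L₂) := by
    rw [pathDirs_eq, h, blockDirs_append]; rfl
  have hw := (asc_core (pathVert d t ht) (pathDirs d t) (move_pathVert d t ht) L₁
    [] (blockDirs L₂) hds).revNot
  rw [revNot_ascW] at hw
  simpa [pathVert_zero] using hw

lemma asc_full (d : D) (t : Fin n → D) (ht : t ∈ R) :
    DWalk (DEdge (R := R)) (ascW (n + 2)) (Sum.inl d) (Sum.inr (Sum.inl ⟨t, ht⟩)) := by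
  have hw := asc_from d t ht (L₁ := []) (L₂ := pathBlocks d t) rfl
  rw [length_pathBlocks] at hw
  simpa [pathVert_zero, blockDirs] using hw

lemma desc_full (d : D) (t : Fin n → D) (ht : t ∈ R) :
    DWalk (DEdge (R := R)) (descW (n + 2)) (Sum.inr (Sum.inl ⟨t, ht⟩)) (Sum.inl d) := by
  have hw := (asc_full d t ht).revNot
  rwa [revNot_ascW] at hw

lemma hgt_take_junction (d : D) (t : Fin n → D) {L₁ L₂ : List Bool}
    (h : pathBlocks d t = L₁ ++ L₂) :
    hgt ((pathDirs d t).take (blockDirs L₁).length) = (L₁.length : ℤ) := by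
  rw [pathDirs_eq, h, blockDirs_append, List.take_left, hgt_blockDirs]

lemma hgt_take_sink (d : D) (t : Fin n → D) {L₁ L₂ : List Bool}
    (h : pathBlocks d t = L₁ ++ false :: L₂) :
    hgt ((pathDirs d t).take ((blockDirs L₁).length + 1)) = (L₁.length : ℤ) + 1 := by
  rw [pathDirs_eq, h, blockDirs_append, List.take_append,
    List.take_of_length_le (Nat.le_add_right _ _), Nat.add_sub_cancel_left]
  have h1 : (blockDirs (false :: L₂)).take 1 = [true] := by simp [blockDirs_cons, block]
  rw [h1, hgt_append, hgt_blockDirs]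
  simp [hgt]

lemma hgt_take_source (d : D) (t : Fin n → D) {L₁ L₂ : List Bool}
    (h : pathBlocks d t = L₁ ++ false :: L₂) :
    hgt ((pathDirs d t).take ((blockDirs L₁).length + 2)) = (L₁.length : ℤ) := by
  rw [pathDirs_eq, h, blockDirs_append, List.take_append,
    List.take_of_length_le (Nat.le_add_right _ _), Nat.add_sub_cancel_left]
  have h1 : (blockDirs (false :: L₂)).take 2 = [true, false] := by simp [blockDirs_cons, block]
  rw [h1, hgt_append, hgt_blockDirs]
  simp [hgt]

end DLayer

end Stmt9
open Stmt9

/-- if a weakly connected component of `𝒟(R)^k` contains a tuple all of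
whose entries have the same level, then every tuple in that component has all entries
of the same level, and the component either equals the component `Δ_k` of the diagonal
or is a single vertex. -/
theorem level_component_dichotomy {D : Type} [Fintype D] [DecidableEq D] {n : ℕ}
    (hn : 1 ≤ n) (R : Set (Fin n → D)) (hR : R.Nonempty)
    (lvl : DVert D n R → ℕ)
    (hlvl : ∀ a b, DEdge a b → lvl b = lvl a + 1)
    (hmin : ∃ v, lvl v = 0)
    (k : ℕ) (hk : 1 ≤ k)
    (c : Fin k → DVert D n R) (hc : ∀ i j, lvl (c i) = lvl (c j)) :
    (∀ t : Fin k → DVert D n R, WeakReach (powEdge k DEdge) c t →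
      ∀ i j, lvl (t i) = lvl (t j)) ∧
    ((∃ v : DVert D n R, WeakReach (powEdge k DEdge) (fun _ => v) c) ∨
      (∀ t : Fin k → DVert D n R, WeakReach (powEdge k DEdge) c t → t = c)) := by
  classical
  obtain ⟨t₀, ht₀⟩ := hR
  set d₀ : D := t₀ ⟨0, hn⟩ with hd₀
  have hbase : ∀ d : D, lvl (Sum.inl d) = lvl (Sum.inl d₀) :=
    fun d => lvl_base_eq hlvl t₀ ht₀ d d₀
  constructor
  · intro t htr
    induction htr with
    | refl => exact hc
    | tail hbc hstep ih =>
        intro i j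
        rcases hstep with h | h
        · rw [hlvl _ _ (h i), hlvl _ _ (h j), ih i j]
        · have h1 := hlvl _ _ (h i)
          have h2 := hlvl _ _ (h j)
          have h3 := ih i j
          omega
  · by_cases hsing : ∀ t, WeakReach (powEdge k DEdge) c t → t = c
    · exact Or.inr hsing
    · left
      push_neg at hsing
      obtain ⟨tt, htr, htne⟩ := hsing
      rcases Relation.ReflTransGen.cases_head htr with heq | ⟨c', hstep, -⟩
      · exact absurd heq.symm htne
      have i₀ : Fin k := ⟨0, hk⟩
      rcases hstep with hup | hdown
      · -- every coordinate has an out-edge: go up to the tops, then down to `d₀`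
        have key : ∀ i : Fin k, ∃ m : ℕ,
            (lvl (c i) : ℤ) = (lvl (Sum.inl d₀ : DVert D n R) : ℤ) + m ∧
            DWalk DEdge (ascW (n + 2 - m) ++ descW (n + 2)) (c i) (Sum.inl d₀) := by
          intro i
          obtain ⟨d, t, ht, p, hp, hif⟩ := hup i
          obtain ⟨j, hjle, hcj, hout⟩ : ∃ j, j ≤ (pathDirs d t).length ∧
              c i = pathVert d t ht j ∧
              ((pathDirs d t).getD j true = true ∨
                (0 < j ∧ (pathDirs d t).getD (j - 1) true = false)) := by
            have hgd : ∀ (q : ℕ) (hq : q < (pathDirs d t).length),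
                (pathDirs d t).getD q true = (pathDirs d t).get ⟨q, hq⟩ := fun q hq => by
              rw [List.getD_eq_getElem _ _ hq, List.get_eq_getElem]
            by_cases hb : (pathDirs d t).get ⟨p, hp⟩ = true
            · rw [if_pos hb] at hif
              exact ⟨p, le_of_lt hp, hif.1, Or.inl (by rw [hgd p hp]; exact hb)⟩
            · rw [if_neg hb] at hif
              have hb' : (pathDirs d t).get ⟨p, hp⟩ = false := by simpa using hb
              refine ⟨p + 1, hp, hif.1, Or.inr ⟨Nat.succ_pos _, ?_⟩⟩
              show (pathDirs d t).getD p true = false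
              rw [hgd p hp]; exact hb'
          obtain ⟨L₁, L₂, hL, hcase⟩ := char (pathBlocks d t) j
            (by rw [pathDirs_eq] at hjle; exact hjle)
          have hsum : L₁.length + L₂.length = n + 2 := by
            have hpb := length_pathBlocks d t
            rw [hL, List.length_append] at hpb
            exact hpb
          have hlvlci : (lvl (c i) : ℤ) =
              (lvl (Sum.inl d : DVert D n R) : ℤ) + hgt ((pathDirs d t).take j) := by
            rw [hcj]; exact lvl_pathVert hlvl d t ht j hjle
          rw [hbase d] at hlvlci
          rcases hcase with hj | ⟨L₂', hL₂, hj12⟩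
          · -- at a junction between blocks
            refine ⟨L₁.length, ?_, ?_⟩
            · rw [hlvlci, hj, hgt_take_junction d t hL]
            · have hw2 : n + 2 - L₁.length = L₂.length := by omega
              rw [hcj, hj, hw2]
              exact (asc_from d t ht hL).append (desc_full d₀ t ht)
          · subst hL₂
            have h0 : (pathDirs d t).getD ((blockDirs L₁).length) true = true := by
              have := getD_pb d t hL 0 (by simp [blockDirs_cons, block])
              simpa [blockDirs_cons, block] using this
            have h1 : (pathDirs d t).getD ((blockDirs L₁).length + 1) true = false := by
              have := getD_pb d t hL 1 (by simp [blockDirs_cons, block])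
              simpa [blockDirs_cons, block] using this
            have h2 : (pathDirs d t).getD ((blockDirs L₁).length + 2) true = true := by
              have := getD_pb d t hL 2 (by simp [blockDirs_cons, block])
              simpa [blockDirs_cons, block] using this
            rcases hj12 with hj | hj
            · -- a sink has no out-edge: contradiction
              exfalso
              rcases hout with hd1 | ⟨-, hd1⟩
              · rw [hj, h1] at hd1
                exact Bool.noConfusion hd1
              · rw [hj, Nat.add_sub_cancel, h0] at hd1
                exact Bool.noConfusion hd1
            · -- at a source inside a zigzag
              refine ⟨L₁.length, ?_, ?_⟩
              · rw [hlvlci, hj, hgt_take_source d t hL]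
              · have hL' : pathBlocks d t = (L₁ ++ [false]) ++ L₂' := by rw [hL]; simp
                have hBlen : (blockDirs (L₁ ++ [false])).length
                    = (blockDirs L₁).length + 3 := by
                  rw [blockDirs_append]
                  simp [blockDirs, block]
                have hb3 : (blockDirs (false :: L₂')).length
                    = (blockDirs L₂').length + 3 := by
                  simp [blockDirs_cons, block] <;> omega
                have hlt : (blockDirs L₁).length + 2 < (pathDirs d t).length := by
                  rw [len_pb d t hL]
                  omega
                have s2' := move_pathVert d t ht ((blockDirs L₁).length + 2) hlt
                rw [h2] at s2'
                have w3 : DWalk DEdge [true, false, true]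
                    (pathVert d t ht ((blockDirs L₁).length + 2))
                    (pathVert d t ht ((blockDirs L₁).length + 3)) :=
                  ⟨_, s2', _, s2'.symmDir, _, s2', rfl⟩
                have w1 := asc_from d t ht hL'
                rw [hBlen] at w1
                have hsum' : L₁.length + L₂'.length + 1 = n + 2 := by
                  simp at hsum
                  omega
                have hw2 : n + 2 - L₁.length = L₂'.length + 1 := by omega
                rw [hcj, hj, hw2, ascW_succ]
                exact (w3.append w1).append (desc_full d₀ t ht)
        choose m hm hw using key
        have hwalk : ∀ i, DWalk DEdge (ascW (n + 2 - m i₀) ++ descW (n + 2)) (c i)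
            (Sum.inl d₀) := by
          intro i
          have hmeq : m i = m i₀ := by
            have h1 := hm i
            have h2 := hm i₀
            have h3 := hc i i₀
            omega
          rw [← hmeq]
          exact hw i
        have hpow := DWalk.pow (E := DEdge) (t := fun _ => Sum.inl d₀) hwalk
        exact ⟨Sum.inl d₀, weakReach_symm hpow.weakReach⟩
      · -- every coordinate has an in-edge: go down to the bases, then up to `t₀`
        have key : ∀ i : Fin k, ∃ m : ℕ,
            (lvl (c i) : ℤ) = (lvl (Sum.inl d₀ : DVert D n R) : ℤ) + m ∧
            DWalk DEdge (descW m ++ ascW (n + 2)) (c i)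
              (Sum.inr (Sum.inl ⟨t₀, ht₀⟩) : DVert D n R) := by
          intro i
          obtain ⟨d, t, ht, p, hp, hif⟩ := hdown i
          obtain ⟨j, hjle, hcj, hin⟩ : ∃ j, j ≤ (pathDirs d t).length ∧
              c i = pathVert d t ht j ∧
              ((0 < j ∧ (pathDirs d t).getD (j - 1) true = true) ∨
                (pathDirs d t).getD j true = false) := by
            have hgd : ∀ (q : ℕ) (hq : q < (pathDirs d t).length),
                (pathDirs d t).getD q true = (pathDirs d t).get ⟨q, hq⟩ := fun q hq => by
              rw [List.getD_eq_getElem _ _ hq, List.get_eq_getElem]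
            by_cases hb : (pathDirs d t).get ⟨p, hp⟩ = true
            · rw [if_pos hb] at hif
              refine ⟨p + 1, hp, hif.2, Or.inl ⟨Nat.succ_pos _, ?_⟩⟩
              show (pathDirs d t).getD p true = true
              rw [hgd p hp]; exact hb
            · rw [if_neg hb] at hif
              have hb' : (pathDirs d t).get ⟨p, hp⟩ = false := by simpa using hb
              exact ⟨p, le_of_lt hp, hif.2, Or.inr (by rw [hgd p hp]; exact hb')⟩
          obtain ⟨L₁, L₂, hL, hcase⟩ := char (pathBlocks d t) j
            (by rw [pathDirs_eq] at hjle; exact hjle)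
          have hsum : L₁.length + L₂.length = n + 2 := by
            have hpb := length_pathBlocks d t
            rw [hL, List.length_append] at hpb
            exact hpb
          have hlvlci : (lvl (c i) : ℤ) =
              (lvl (Sum.inl d : DVert D n R) : ℤ) + hgt ((pathDirs d t).take j) := by
            rw [hcj]; exact lvl_pathVert hlvl d t ht j hjle
          rw [hbase d] at hlvlci
          rcases hcase with hj | ⟨L₂', hL₂, hj12⟩
          · -- at a junction between blocks
            refine ⟨L₁.length, ?_, ?_⟩
            · rw [hlvlci, hj, hgt_take_junction d t hL]
            · rw [hcj, hj]
              exact (desc_from d t ht hL).append (asc_full d t₀ ht₀)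
          · subst hL₂
            have h0 : (pathDirs d t).getD ((blockDirs L₁).length) true = true := by
              have := getD_pb d t hL 0 (by simp [blockDirs_cons, block])
              simpa [blockDirs_cons, block] using this
            have h1 : (pathDirs d t).getD ((blockDirs L₁).length + 1) true = false := by
              have := getD_pb d t hL 1 (by simp [blockDirs_cons, block])
              simpa [blockDirs_cons, block] using this
            have h2 : (pathDirs d t).getD ((blockDirs L₁).length + 2) true = true := by
              have := getD_pb d t hL 2 (by simp [blockDirs_cons, block])
              simpa [blockDirs_cons, block] using this
            rcases hj12 with hj | hj
            · -- at a sink inside a zigzag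
              refine ⟨L₁.length + 1, ?_, ?_⟩
              · rw [hlvlci, hj, hgt_take_sink d t hL]
                push_cast
                ring
              · have hb3 : (blockDirs (false :: L₂')).length
                    = (blockDirs L₂').length + 3 := by
                  simp [blockDirs_cons, block] <;> omega
                have hlt0 : (blockDirs L₁).length < (pathDirs d t).length := by
                  rw [len_pb d t hL]
                  omega
                have s0' := move_pathVert d t ht ((blockDirs L₁).length) hlt0
                rw [h0] at s0'
                have w3 : DWalk DEdge [false, true, false]
                    (pathVert d t ht ((blockDirs L₁).length + 1))
                    (pathVert d t ht ((blockDirs L₁).length)) :=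
                  ⟨_, s0'.symmDir, _, s0', _, s0'.symmDir, rfl⟩
                rw [hcj, hj, descW_succ]
                exact (w3.append (desc_from d t ht hL)).append (asc_full d t₀ ht₀)
            · -- a source has no in-edge: contradiction
              exfalso
              rcases hin with ⟨-, hd1⟩ | hd1
              · rw [hj] at hd1
                have e : (blockDirs L₁).length + 2 - 1 = (blockDirs L₁).length + 1 := by omega
                rw [e, h1] at hd1
                exact Bool.noConfusion hd1
              · rw [hj, h2] at hd1
                exact Bool.noConfusion hd1
        choose m hm hw using key
        have hwalk : ∀ i, DWalk DEdge (descW (m i₀) ++ ascW (n + 2)) (c i)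
            (Sum.inr (Sum.inl ⟨t₀, ht₀⟩) : DVert D n R) := by
          intro i
          have hmeq : m i = m i₀ := by
            have h1 := hm i
            have h2 := hm i₀
            have h3 := hc i i₀
            omega
          rw [← hmeq]
          exact hw i
        have hpow := DWalk.pow (E := DEdge)
          (t := fun _ => (Sum.inr (Sum.inl ⟨t₀, ht₀⟩) : DVert D n R)) hwalk
        exact ⟨Sum.inr (Sum.inl ⟨t₀, ht₀⟩), weakReach_symm hpow.weakReach⟩
end

section
/- Let D be a finite set, R ⊆ D^n a nonempty n-ary relation, 𝒟 = 𝒟(R) the digraph constructed from R, and ⊑ the linear order on V^𝒟 defined from a suitable linear order on D × R. Let K and L be subsets of V^𝒟 with L ⊄ R such that: for every x ∈ K there is y' ∈ L with (x,y') an edge of 𝒟, and for every y ∈ L there is x' ∈ K with (x',y) an edge of 𝒟. If c is the ⊑-minimal element of K and d is the ⊑-minimal element of L, then (c,d) is an edge of 𝒟. -/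
open scoped NNRat

/-- Membership of a vertex of `𝒟(R)` in the copy `P_e` of the path joining `e.1 ∈ D`
to `e.2 ∈ R`. -/
def memP {D : Type} [DecidableEq D] {n : ℕ} {R : Set (Fin n → D)}
    (e : D × {t : Fin n → D // t ∈ R}) (x : DVert D n R) : Prop :=
  ∃ j : ℕ, j ≤ (pathDirs e.1 e.2.1).length ∧ x = pathVert e.1 e.2.1 e.2.2 j

/-- The position (distance from the initial vertex) of a vertex on the path `P_e`. -/
def posP {D : Type} [DecidableEq D] {n : ℕ} {R : Set (Fin n → D)}
    (e : D × {t : Fin n → D // t ∈ R}) : DVert D n R → ℕ :=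
  fun x => match x with
  | Sum.inl _ => 0
  | Sum.inr (Sum.inl _) => (pathDirs e.1 e.2.1).length
  | Sum.inr (Sum.inr iv) => iv.j

/-- The strict order `⊏` on the vertices of `𝒟(R)` determined by the level `lvl`,
a linear order `eord` on `D × R` and the map `ε = eps`. -/
def sqlt {D : Type} [DecidableEq D] {n : ℕ} {R : Set (Fin n → D)}
    (lvl : DVert D n R → ℕ)
    (eord : LinearOrder (D × {t : Fin n → D // t ∈ R}))
    (eps : DVert D n R → D × {t : Fin n → D // t ∈ R})
    (x y : DVert D n R) : Prop :=
  lvl x < lvl y ∨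
    (lvl x = lvl y ∧ eord.lt (eps x) (eps y)) ∨
    (lvl x = lvl y ∧ eps x = eps y ∧ posP (eps x) x < posP (eps x) y)


/-- Height of position `j` on the path with directions `ds`. -/
def hgt (ds : List Bool) (j : ℕ) : ℤ :=
  ((ds.take j).count true : ℤ) - ((ds.take j).count false)

/-- Up-edge relation on positions of the path with directions `ds`. -/
def UpE (ds : List Bool) (u v : ℕ) : Prop :=
  ∃ i, i < ds.length ∧
    ((ds.getD i true = true ∧ u = i ∧ v = i + 1) ∨
     (ds.getD i true = false ∧ u = i + 1 ∧ v = i))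

/-- Tail-side lists of a `Q_S` path: blocks `[true]` or `[true,false,true]`, final `[true]`. -/
inductive ZZL : List Bool → Prop
  | base : ZZL [true]
  | single (l : List Bool) : ZZL l → ZZL (true :: l)
  | zig (l : List Bool) : ZZL l → ZZL (true :: false :: true :: l)

lemma hgt_zero (ds : List Bool) : hgt ds 0 = 0 := by simp [hgt]

lemma hgt_cons_t (ds : List Bool) (j : ℕ) :
    hgt (true :: ds) (j + 1) = 1 + hgt ds j := by
  simp [hgt, List.count_cons]; ring

lemma hgt_cons_f (ds : List Bool) (j : ℕ) :
    hgt (false :: ds) (j + 1) = hgt ds j - 1 := by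
  simp [hgt, List.count_cons]; ring

lemma ZZL_nonneg {l : List Bool} (hl : ZZL l) : ∀ j, 0 ≤ hgt l j := by
  induction hl with
  | base =>
    intro j
    cases j with
    | zero => simp [hgt_zero]
    | succ j => unfold hgt; simp
  | single l hl ih =>
    intro j
    cases j with
    | zero => simp [hgt_zero]
    | succ j => rw [hgt_cons_t]; have := ih j; omega
  | zig l hl ih =>
    intro j
    match j with
    | 0 => simp [hgt_zero]
    | 1 => simp [hgt_cons_t, hgt_zero]
    | 2 => simp [hgt_cons_t, hgt_cons_f, hgt_zero]
    | (j+3) =>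
      rw [hgt_cons_t, hgt_cons_f, hgt_cons_t]
      have := ih j; omega

lemma ZZL_end {l : List Bool} (hl : ZZL l) :
    1 ≤ hgt l l.length ∧ ∀ j < l.length, hgt l j ≤ hgt l l.length - 1 := by
  induction hl with
  | base =>
    constructor
    · simp [hgt]
    · intro j hj
      simp only [List.length_singleton] at hj
      interval_cases j
      simp [hgt]
  | single l hl ih =>
    obtain ⟨h1, h2⟩ := ih
    have hL : (true :: l).length = l.length + 1 := by simp
    constructor
    · rw [hL, hgt_cons_t]; omega
    · intro j hj
      rw [hL] at hj ⊢
      match j with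
      | 0 => rw [hgt_cons_t, hgt_zero]; omega
      | (j+1) =>
        rw [hgt_cons_t, hgt_cons_t]
        have := h2 j (by omega); omega
  | zig l hl ih =>
    obtain ⟨h1, h2⟩ := ih
    have hL : (true :: false :: true :: l).length = l.length + 3 := by simp
    have e3 : ∀ j, hgt (true :: false :: true :: l) (j + 3) = 1 + hgt l j := by
      intro j
      show hgt (true :: false :: true :: l) ((j + 2) + 1) = _
      rw [show j + 2 + 1 = (j+2)+1 from rfl, hgt_cons_t]
      rw [show j + 2 = (j+1)+1 from rfl, hgt_cons_f, hgt_cons_t]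
      omega
    constructor
    · rw [hL, e3]; omega
    · intro j hj
      rw [hL] at hj ⊢
      rw [e3]
      match j with
      | 0 => rw [hgt_zero]; omega
      | 1 => rw [hgt_cons_t, hgt_zero]; omega
      | 2 => rw [show (2:ℕ) = 1 + 1 from rfl, hgt_cons_t, hgt_cons_f, hgt_zero]; omega
      | (j+3) =>
        rw [e3]
        have := h2 j (by omega); omega

/-- The tail height of edge `i`. -/
def th (ds : List Bool) (i : ℕ) : ℤ :=
  if ds.getD i true then hgt ds i else hgt ds (i + 1)

lemma th_cons_t (l : List Bool) (i : ℕ) :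
    th (true :: l) (i + 1) = 1 + th l i := by
  unfold th
  simp only [List.getD_cons_succ]
  split
  · rw [hgt_cons_t]
  · rw [hgt_cons_t]

lemma th_cons_f (l : List Bool) (i : ℕ) :
    th (false :: l) (i + 1) = th l i - 1 := by
  unfold th
  simp only [List.getD_cons_succ]
  split
  · rw [hgt_cons_f]
  · rw [hgt_cons_f]

lemma th_nonneg {l : List Bool} (hl : ZZL l) (i : ℕ) : 0 ≤ th l i := by
  unfold th; split <;> exact ZZL_nonneg hl _

lemma th_cons3 (l : List Bool) (i : ℕ) :
    th (true :: false :: true :: l) (i + 3) = 1 + th l i := by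
  show th (true :: false :: true :: l) ((i+2) + 1) = _
  rw [th_cons_t, show i + 2 = (i+1)+1 from rfl, th_cons_f, th_cons_t]
  ring

/-- Lemma A: two distinct edges of a `ZZL` path with the same tail height lie in a
common zigzag. -/
lemma ZZL_runs {l : List Bool} (hl : ZZL l) : ∀ i1 i2, i1 < i2 → i2 < l.length →
    th l i1 = th l i2 →
    ∃ a, a + 2 < l.length ∧ l.getD a true = true ∧ l.getD (a+1) true = false ∧
      l.getD (a+2) true = true ∧
      ((i1 = a ∧ i2 = a + 1) ∨ (i1 = a ∧ i2 = a + 2) ∨ (i1 = a + 1 ∧ i2 = a + 2)) := by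
  induction hl with
  | base =>
    intro i1 i2 h12 h2 _
    simp only [List.length_singleton] at h2; omega
  | single l hl ih =>
    intro i1 i2 h12 h2 hth
    simp only [List.length_cons] at h2
    match i1, i2 with
    | 0, (i2+1) =>
      exfalso
      have h0 : th (true :: l) 0 = 0 := by simp [th, hgt_zero]
      rw [h0, th_cons_t] at hth
      have := th_nonneg hl i2; omega
    | (i1+1), (i2+1) =>
      rw [th_cons_t, th_cons_t] at hth
      obtain ⟨a, ha, g0, g1, g2, hcases⟩ := ih i1 i2 (by omega) (by omega) (by omega)
      exact ⟨a + 1, by simp; omega, by simpa using g0, by simpa using g1,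
        by simpa using g2, by omega⟩
  | zig l hl ih =>
    intro i1 i2 h12 h2 hth
    have hL : (true :: false :: true :: l).length = l.length + 3 := by simp
    rw [hL] at h2
    have t0 : th (true :: false :: true :: l) 0 = 0 := by simp [th, hgt_zero]
    have t1 : th (true :: false :: true :: l) 1 = 0 := by
      simp [th, hgt_cons_t, hgt_cons_f, hgt_zero]
    have t2 : th (true :: false :: true :: l) 2 = 0 := by
      simp only [th, List.getD_cons_succ, List.getD_cons_zero]
      rw [if_pos trivial, show (2:ℕ) = 1+1 from rfl, hgt_cons_t, hgt_cons_f, hgt_zero]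
      ring
    match i1, i2 with
    | 0, 1 => exact ⟨0, by omega, by simp, by simp, by simp, by omega⟩
    | 0, 2 => exact ⟨0, by omega, by simp, by simp, by simp, by omega⟩
    | 1, 2 => exact ⟨0, by omega, by simp, by simp, by simp, by omega⟩
    | 0, (i2+3) =>
      exfalso
      rw [t0, th_cons3] at hth
      have := th_nonneg hl i2; omega
    | 1, (i2+3) =>
      exfalso
      rw [t1, th_cons3] at hth
      have := th_nonneg hl i2; omega
    | 2, (i2+3) =>
      exfalso
      rw [t2, th_cons3] at hth
      have := th_nonneg hl i2; omega
    | (i1+3), (i2+3) =>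
      rw [th_cons3, th_cons3] at hth
      obtain ⟨a, ha, g0, g1, g2, hcases⟩ := ih i1 i2 (by omega) (by omega) (by omega)
      refine ⟨a + 3, by simp; omega, ?_, ?_, ?_, by omega⟩ <;>
        simp only [List.getD_cons_succ] <;> assumption

/-- FAN: given two up-edges with equal tail heights, ordered tails and reverse-ordered
heads, the first tail has an up-edge to the second head. -/
lemma ZZL_fan {l : List Bool} (hl : ZZL l) {u1 v1 u2 v2 : ℕ}
    (h1 : UpE l u1 v1) (h2 : UpE l u2 v2) (hh : hgt l u1 = hgt l u2)
    (hvv : v2 ≤ v1) : UpE l u1 v2 := by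
  obtain ⟨i1, hi1, hc1⟩ := h1
  obtain ⟨i2, hi2, hc2⟩ := h2
  have e1 : th l i1 = hgt l u1 := by
    rcases hc1 with ⟨g, hu, hv⟩ | ⟨g, hu, hv⟩ <;> subst hu <;> unfold th <;> rw [g] <;> simp
  have e2 : th l i2 = hgt l u2 := by
    rcases hc2 with ⟨g, hu, hv⟩ | ⟨g, hu, hv⟩ <;> subst hu <;> unfold th <;> rw [g] <;> simp
  have hth : th l i1 = th l i2 := by rw [e1, e2, hh]
  rcases Nat.lt_trichotomy i1 i2 with hlt | heq | hgt2
  · obtain ⟨a, ha, g0, g1, g2, hcases⟩ := ZZL_runs hl i1 i2 hlt hi2 hth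
    rcases hcases with ⟨q1, q2⟩ | ⟨q1, q2⟩ | ⟨q1, q2⟩
    · -- i1 = a (dir T), i2 = a+1 (dir F): v2 = a+1, goal a → a+1
      rcases hc1 with ⟨g, hu, hv⟩ | ⟨g, hu, hv⟩
      · rcases hc2 with ⟨g', hu', hv'⟩ | ⟨g', hu', hv'⟩
        · rw [q2, g1] at g'; exact absurd g' (by simp)
        · exact ⟨a, by omega, Or.inl ⟨g0, by omega, by omega⟩⟩
      · rw [q1, g0] at g; exact absurd g (by simp)
    · -- i1 = a, i2 = a+2: v1 = a+1, v2 = a+3: contradiction with v2 ≤ v1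
      exfalso
      rcases hc1 with ⟨g, hu, hv⟩ | ⟨g, hu, hv⟩
      · rcases hc2 with ⟨g', hu', hv'⟩ | ⟨g', hu', hv'⟩
        · omega
        · rw [q2, g2] at g'; exact absurd g' (by simp)
      · rw [q1, g0] at g; exact absurd g (by simp)
    · -- i1 = a+1 (dir F), i2 = a+2 (dir T): v1 = a+1, v2 = a+3: contradiction
      exfalso
      rcases hc1 with ⟨g, hu, hv⟩ | ⟨g, hu, hv⟩
      · rw [q1, g1] at g; exact absurd g (by simp)
      · rcases hc2 with ⟨g', hu', hv'⟩ | ⟨g', hu', hv'⟩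
        · omega
        · rw [q2, g2] at g'; exact absurd g' (by simp)
  · subst heq
    rcases hc1 with ⟨g, hu, hv⟩ | ⟨g, hu, hv⟩ <;>
      rcases hc2 with ⟨g', hu', hv'⟩ | ⟨g', hu', hv'⟩
    · exact ⟨i1, hi1, Or.inl ⟨g, hu, hv'⟩⟩
    · rw [g] at g'; exact absurd g' (by simp)
    · rw [g] at g'; exact absurd g' (by simp)
    · exact ⟨i1, hi1, Or.inr ⟨g, hu, hv'⟩⟩
  · obtain ⟨a, ha, g0, g1, g2, hcases⟩ := ZZL_runs hl i2 i1 hgt2 hi1 hth.symm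
    -- in all cases: u1 = a+2, v2 = a+1, via edge a+1 (dir F)
    rcases hcases with ⟨q1, q2⟩ | ⟨q1, q2⟩ | ⟨q1, q2⟩
    · rcases hc1 with ⟨g, hu, hv⟩ | ⟨g, hu, hv⟩
      · rw [q2, g1] at g; exact absurd g (by simp)
      · rcases hc2 with ⟨g', hu', hv'⟩ | ⟨g', hu', hv'⟩
        · exact ⟨a + 1, by omega, Or.inr ⟨g1, by omega, by omega⟩⟩
        · rw [q1, g0] at g'; exact absurd g' (by simp)
    · rcases hc1 with ⟨g, hu, hv⟩ | ⟨g, hu, hv⟩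
      · rcases hc2 with ⟨g', hu', hv'⟩ | ⟨g', hu', hv'⟩
        · exact ⟨a + 1, by omega, Or.inr ⟨g1, by omega, by omega⟩⟩
        · rw [q1, g0] at g'; exact absurd g' (by simp)
      · rw [q2, g2] at g; exact absurd g (by simp)
    · rcases hc1 with ⟨g, hu, hv⟩ | ⟨g, hu, hv⟩
      · rcases hc2 with ⟨g', hu', hv'⟩ | ⟨g', hu', hv'⟩
        · rw [q1, g1] at g'; exact absurd g' (by simp)
        · exact ⟨a + 1, by omega, Or.inr ⟨g1, by omega, by omega⟩⟩
      · rw [q2, g2] at g; exact absurd g (by simp)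

section QDirsFacts

variable {n : ℕ} (S : Finset (Fin n))

lemma ZZL_flat (L : List (Fin n)) :
    ZZL ((L.flatMap fun l => if l ∈ S then [true] else [true, false, true]) ++ [true]) := by
  induction L with
  | nil => simpa using ZZL.base
  | cons hd tl ih =>
    rw [List.flatMap_cons, List.append_assoc]
    by_cases h : hd ∈ S
    · simpa [h] using ZZL.single _ ih
    · simpa [h] using ZZL.zig _ ih

lemma ZZL_QDirs : ZZL (QDirs n S) := ZZL.single _ (ZZL_flat S _)

lemma flat_count (L : List (Fin n)) :
    ((L.flatMap fun l => if l ∈ S then [true] else [true, false, true]).count true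
      = (L.flatMap fun l => if l ∈ S then [true] else [true, false, true]).count false
        + L.length)
    ∧ L.length ≤ (L.flatMap fun l => if l ∈ S then [true] else [true, false, true]).length := by
  induction L with
  | nil => simp
  | cons hd tl ih =>
    obtain ⟨ih1, ih2⟩ := ih
    rw [List.flatMap_cons]
    simp only [List.length_flatMap] at ih2
    by_cases h : hd ∈ S <;>
      refine ⟨?_, ?_⟩ <;>
      simp only [h, ite_true, ite_false, List.count_append, List.length_append,
        List.count_cons, List.count_nil, List.length_cons, List.length_nil,
        List.length_flatMap, ih1] <;>
      simp <;>
      omega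

lemma QDirs_len (hn : 1 ≤ n) : 3 ≤ (QDirs n S).length := by
  have := (flat_count S (List.finRange n)).2
  simp only [List.length_finRange] at this
  simp only [QDirs, List.length_cons, List.length_append, List.length_singleton]
  omega

lemma QDirs_hgt_end : hgt (QDirs n S) (QDirs n S).length = n + 2 := by
  have h := (flat_count S (List.finRange n)).1
  simp only [List.length_finRange] at h
  unfold hgt
  rw [List.take_length]
  simp only [QDirs, List.count_cons, List.count_append, List.count_singleton]
  simp only [h]
  push_cast
  simp
  ring

lemma QDirs_hgt_pos (j : ℕ) (hj : 1 ≤ j) : 1 ≤ hgt (QDirs n S) j := by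
  obtain ⟨k, rfl⟩ : ∃ k, j = k + 1 := ⟨j - 1, by omega⟩
  rw [show QDirs n S = true :: _ from rfl, hgt_cons_t]
  have := ZZL_nonneg (ZZL_flat S (List.finRange n)) k
  omega

lemma QDirs_hgt_upper (j : ℕ) (hj : j < (QDirs n S).length) :
    hgt (QDirs n S) j ≤ n + 1 := by
  have h1 := (ZZL_end (ZZL_QDirs S)).2 j hj
  rw [QDirs_hgt_end] at h1
  omega

lemma QDirs_head (h : 0 < (QDirs n S).length) : (QDirs n S).getD 0 true = true := rfl

end QDirsFacts

section GraphFacts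

variable {D : Type} [DecidableEq D] {n : ℕ} {R : Set (Fin n → D)}

lemma hgt_succ (ds : List Bool) (j : ℕ) (hj : j < ds.length) :
    hgt ds (j + 1) = hgt ds j + (if ds.getD j true = true then 1 else -1) := by
  unfold hgt
  rw [List.take_succ, List.getElem?_eq_getElem hj, List.getD_eq_getElem _ _ hj]
  cases h : ds[j] <;> simp [h, List.count_append] <;> ring

lemma get_eq_getD (ds : List Bool) (i : ℕ) (hi : i < ds.length) :
    ds.get ⟨i, hi⟩ = ds.getD i true := by
  rw [List.get_eq_getElem, List.getD_eq_getElem _ _ hi]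

lemma pathVert_zero (d : D) (t : Fin n → D) (ht : t ∈ R) :
    pathVert d t ht 0 = Sum.inl d := by rfl

lemma pathVert_top (d : D) (t : Fin n → D) (ht : t ∈ R) {j : ℕ}
    (h0 : j ≠ 0) (h : (pathDirs d t).length ≤ j) :
    pathVert d t ht j = Sum.inr (Sum.inl ⟨t, ht⟩) := by
  unfold pathVert
  exact (dif_neg h0).trans (dif_pos h)

lemma pathVert_mid (d : D) (t : Fin n → D) (ht : t ∈ R) {j : ℕ}
    (h0 : 0 < j) (hl : j < (pathDirs d t).length) :
    pathVert d t ht j = Sum.inr (Sum.inr ⟨d, t, ht, j, h0, hl⟩) := by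
  unfold pathVert
  exact (dif_neg (by omega)).trans (dif_neg (by omega))

lemma pathVert_eq_inl {d : D} {t : Fin n → D} {ht : t ∈ R} {j : ℕ} {a : D}
    (h : pathVert d t ht j = Sum.inl a) : j = 0 ∧ d = a := by
  by_cases h1 : j = 0
  · subst h1; rw [pathVert_zero] at h; exact ⟨rfl, Sum.inl.inj h⟩
  · by_cases h2 : (pathDirs d t).length ≤ j
    · rw [pathVert_top _ _ _ h1 h2] at h; exact absurd h Sum.inr_ne_inl
    · rw [pathVert_mid _ _ _ (by omega) (by omega)] at h; exact absurd h Sum.inr_ne_inl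

lemma pathVert_eq_inner {d : D} {t : Fin n → D} {ht : t ∈ R} {j : ℕ}
    {iv : InnerVert D n R} (h : pathVert d t ht j = Sum.inr (Sum.inr iv)) :
    d = iv.d ∧ t = iv.r ∧ j = iv.j ∧ 0 < j ∧ j < (pathDirs d t).length := by
  by_cases h1 : j = 0
  · subst h1; rw [pathVert_zero] at h; exact absurd h Sum.inl_ne_inr
  · by_cases h2 : (pathDirs d t).length ≤ j
    · rw [pathVert_top _ _ _ h1 h2] at h
      injection h with h; exact absurd h Sum.inl_ne_inr
    · rw [pathVert_mid _ _ _ (by omega) (by omega)] at h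
      injection h with h
      injection h with h
      subst h
      exact ⟨rfl, rfl, rfl, by omega, by omega⟩

lemma pathVert_eq_top {d : D} {t : Fin n → D} {ht : t ∈ R} {j : ℕ}
    {s : {t : Fin n → D // t ∈ R}} (h : pathVert d t ht j = Sum.inr (Sum.inl s)) :
    (pathDirs d t).length ≤ j ∧ s = ⟨t, ht⟩ := by
  by_cases h1 : j = 0
  · subst h1; rw [pathVert_zero] at h; exact absurd h Sum.inl_ne_inr
  · by_cases h2 : (pathDirs d t).length ≤ j
    · rw [pathVert_top _ _ _ h1 h2] at h
      injection h with h
      injection h with h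
      exact ⟨h2, h.symm⟩
    · rw [pathVert_mid _ _ _ (by omega) (by omega)] at h
      injection h with h; exact absurd h Sum.inr_ne_inl

variable (eps : DVert D n R → D × {t : Fin n → D // t ∈ R})

lemma eps_inner (heps₁ : ∀ x, memP (eps x) x) (iv : InnerVert D n R) :
    eps (Sum.inr (Sum.inr iv)) = (iv.d, ⟨iv.r, iv.hr⟩) := by
  obtain ⟨j, hj, hx⟩ := heps₁ (Sum.inr (Sum.inr iv))
  obtain ⟨h1, h2, h3, h4, h5⟩ := pathVert_eq_inner hx.symm
  exact Prod.ext h1 (Subtype.ext h2)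

lemma eps_pathVert (heps₁ : ∀ x, memP (eps x) x) {a : D} {t : Fin n → D} {ht : t ∈ R}
    {j : ℕ} (h0 : 0 < j) (hl : j < (pathDirs a t).length) :
    eps (pathVert a t ht j) = (a, ⟨t, ht⟩) := by
  rw [pathVert_mid a t ht h0 hl]
  exact eps_inner eps heps₁ _

lemma eps_base_fst (heps₁ : ∀ x, memP (eps x) x) (a : D) :
    (eps (Sum.inl a)).1 = a := by
  obtain ⟨j, hj, hx⟩ := heps₁ (Sum.inl a)
  exact (pathVert_eq_inl hx.symm).2

lemma posP_pathVert (e : D × {t : Fin n → D // t ∈ R}) {a : D} {t : Fin n → D}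
    {ht : t ∈ R} {j : ℕ} (h0 : 0 < j) (hl : j < (pathDirs a t).length) :
    posP e (pathVert a t ht j) = j := by
  rw [pathVert_mid a t ht h0 hl]
  rfl

variable (lvl : DVert D n R → ℕ)

lemma DEdge_elim {x y : DVert D n R} (h : DEdge x y) :
    ∃ (a : D) (t : Fin n → D) (ht : t ∈ R) (u v : ℕ),
      x = pathVert a t ht u ∧ y = pathVert a t ht v ∧ u ≤ (pathDirs a t).length ∧
      v ≤ (pathDirs a t).length ∧ UpE (pathDirs a t) u v := by
  obtain ⟨a, t, ht, i, hi, hif⟩ := h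
  by_cases hg : (pathDirs a t).get ⟨i, hi⟩ = true
  · rw [if_pos hg] at hif
    rw [get_eq_getD] at hg
    exact ⟨a, t, ht, i, i + 1, hif.1, hif.2, by omega, by omega, i, hi,
      Or.inl ⟨hg, rfl, rfl⟩⟩
  · rw [if_neg hg] at hif
    rw [get_eq_getD] at hg
    exact ⟨a, t, ht, i + 1, i, hif.1, hif.2, by omega, by omega, i, hi,
      Or.inr ⟨by simpa using hg, rfl, rfl⟩⟩

lemma UpE_DEdge {a : D} {t : Fin n → D} (ht : t ∈ R) {u v : ℕ}
    (h : UpE (pathDirs a t) u v) : DEdge (pathVert a t ht u) (pathVert a t ht v) := by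
  obtain ⟨i, hi, hc⟩ := h
  rcases hc with ⟨g, hu, hv⟩ | ⟨g, hu, hv⟩
  · refine ⟨a, t, ht, i, hi, ?_⟩
    rw [if_pos (by rw [get_eq_getD]; exact g), hu, hv]
    exact ⟨rfl, rfl⟩
  · refine ⟨a, t, ht, i, hi, ?_⟩
    rw [if_neg (by rw [get_eq_getD, g]; simp), hu, hv]
    exact ⟨rfl, rfl⟩

lemma lvl_pathVert (hlvl : ∀ a b, DEdge a b → lvl b = lvl a + 1)
    (a : D) (t : Fin n → D) (ht : t ∈ R) :
    ∀ j, j ≤ (pathDirs a t).length →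
      (lvl (pathVert a t ht j) : ℤ) = lvl (Sum.inl a) + hgt (pathDirs a t) j := by
  intro j hj
  induction j with
  | zero => rw [pathVert_zero, hgt_zero]; ring
  | succ j ih =>
    have hjlen : j < (pathDirs a t).length := by omega
    have ihv := ih (le_of_lt hjlen)
    have hstep := hgt_succ (pathDirs a t) j hjlen
    by_cases hg : (pathDirs a t).getD j true = true
    · have hE : DEdge (pathVert a t ht j) (pathVert a t ht (j + 1)) := by
        refine ⟨a, t, ht, j, hjlen, ?_⟩
        rw [if_pos (by rw [get_eq_getD]; exact hg)]
        exact ⟨rfl, rfl⟩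
      have := hlvl _ _ hE
      rw [hg, if_pos rfl] at hstep
      omega
    · have hE : DEdge (pathVert a t ht (j + 1)) (pathVert a t ht j) := by
        refine ⟨a, t, ht, j, hjlen, ?_⟩
        rw [if_neg (by rw [get_eq_getD]; exact hg)]
        exact ⟨rfl, rfl⟩
      have := hlvl _ _ hE
      rw [if_neg hg] at hstep
      omega

/-- Every vertex lies on some path. -/
lemma DVert_cases (hn : 1 ≤ n) (t0 : Fin n → D) (ht0 : t0 ∈ R) (v : DVert D n R) :
    ∃ (a : D) (t : Fin n → D) (ht : t ∈ R) (j : ℕ),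
      j ≤ (pathDirs a t).length ∧ v = pathVert a t ht j := by
  have hlen : ∀ (a : D) (t : Fin n → D), 3 ≤ (pathDirs a t).length :=
    fun a t => QDirs_len _ hn
  match v with
  | Sum.inl a => exact ⟨a, t0, ht0, 0, by omega, (pathVert_zero a t0 ht0).symm⟩
  | Sum.inr (Sum.inl ⟨t, ht⟩) =>
    refine ⟨t ⟨0, hn⟩, t, ht, (pathDirs (t ⟨0, hn⟩) t).length, le_rfl, ?_⟩
    rw [pathVert_top _ _ _ (by have := hlen (t ⟨0, hn⟩) t; omega) le_rfl]
  | Sum.inr (Sum.inr iv) =>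
    exact ⟨iv.d, iv.r, iv.hr, iv.j, le_of_lt iv.hjlen,
      (pathVert_mid iv.d iv.r iv.hr iv.hj0 iv.hjlen).symm⟩

lemma lvl_facts (hn : 1 ≤ n) (t0 : Fin n → D) (ht0 : t0 ∈ R)
    (hlvl : ∀ a b, DEdge a b → lvl b = lvl a + 1) (hmin : ∃ v, lvl v = 0) :
    (∀ a : D, lvl (Sum.inl a) = 0) ∧
    (∀ s : {t : Fin n → D // t ∈ R}, lvl (Sum.inr (Sum.inl s)) = n + 2) ∧
    (∀ iv : InnerVert D n R, (lvl (Sum.inr (Sum.inr iv)) : ℤ) = hgt (pathDirs iv.d iv.r) iv.j) := by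
  have hlen : ∀ (a : D) (t : Fin n → D), 3 ≤ (pathDirs a t).length :=
    fun a t => QDirs_len _ hn
  have hend : ∀ (a : D) (t : Fin n → D),
      hgt (pathDirs a t) (pathDirs a t).length = n + 2 := fun a t => QDirs_hgt_end _
  -- all base vertices have equal level
  have hbase_eq : ∀ a b : D, lvl (Sum.inl a) = lvl (Sum.inl b) := by
    intro a b
    have ha := lvl_pathVert lvl hlvl a t0 ht0 (pathDirs a t0).length le_rfl
    have hb := lvl_pathVert lvl hlvl b t0 ht0 (pathDirs b t0).length le_rfl
    rw [pathVert_top _ _ _ (by have := hlen a t0; omega) le_rfl] at ha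
    rw [pathVert_top _ _ _ (by have := hlen b t0; omega) le_rfl] at hb
    rw [hend] at ha hb
    omega
  -- base level is zero
  have hbase0 : ∀ a : D, lvl (Sum.inl a) = 0 := by
    obtain ⟨v0, hv0⟩ := hmin
    obtain ⟨a, t, ht, j, hj, rfl⟩ := DVert_cases hn t0 ht0 v0
    have h1 := lvl_pathVert lvl hlvl a t ht j hj
    have h2 : 0 ≤ hgt (pathDirs a t) j := ZZL_nonneg (ZZL_QDirs _) j
    intro b
    have := hbase_eq b a
    omega
  refine ⟨hbase0, ?_, ?_⟩
  · rintro ⟨t, ht⟩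
    have ha := lvl_pathVert lvl hlvl (t ⟨0, hn⟩) t ht (pathDirs (t ⟨0, hn⟩) t).length le_rfl
    rw [pathVert_top _ _ _ (by have := hlen (t ⟨0, hn⟩) t; omega) le_rfl, hend,
      hbase0] at ha
    omega
  · intro iv
    have ha := lvl_pathVert lvl hlvl iv.d iv.r iv.hr iv.j (le_of_lt iv.hjlen)
    rw [pathVert_mid _ _ _ iv.hj0 iv.hjlen] at ha
    rw [ha, hbase0]
    ring

end GraphFacts

section Bridge

variable {D : Type} [DecidableEq D] {n : ℕ} {R : Set (Fin n → D)}

lemma pathDirs_hgt_pos (d : D) (t : Fin n → D) (j : ℕ) (hj : 1 ≤ j) :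
    1 ≤ hgt (pathDirs d t) j := QDirs_hgt_pos _ j hj

lemma pathDirs_hgt_upper (d : D) (t : Fin n → D) (j : ℕ)
    (hj : j < (pathDirs d t).length) : hgt (pathDirs d t) j ≤ n + 1 :=
  QDirs_hgt_upper _ j hj

lemma pathDirs_len (hn : 1 ≤ n) (d : D) (t : Fin n → D) :
    3 ≤ (pathDirs d t).length := QDirs_len _ hn

lemma pathDirs_hgt_end (d : D) (t : Fin n → D) :
    hgt (pathDirs d t) (pathDirs d t).length = n + 2 := QDirs_hgt_end _

lemma pathDirs_ZZL (d : D) (t : Fin n → D) : ZZL (pathDirs d t) := ZZL_QDirs _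

lemma pathDirs_head (d : D) (t : Fin n → D) (h : 0 < (pathDirs d t).length) :
    (pathDirs d t).get ⟨0, h⟩ = true := rfl

lemma DEdge_inl_elim {a : D} {y : DVert D n R} (h : DEdge (Sum.inl a) y) :
    ∃ (t : Fin n → D) (ht : t ∈ R), y = pathVert a t ht 1 := by
  obtain ⟨a', t, ht, i, hi, hif⟩ := h
  by_cases hg : (pathDirs a' t).get ⟨i, hi⟩ = true
  · rw [if_pos hg] at hif
    obtain ⟨h1, h2⟩ := hif
    obtain ⟨hi0, haa⟩ := pathVert_eq_inl h1.symm
    subst hi0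
    subst haa
    exact ⟨t, ht, h2⟩
  · rw [if_neg hg] at hif
    obtain ⟨h1, h2⟩ := hif
    obtain ⟨hi0, -⟩ := pathVert_eq_inl h1.symm
    omega

end Bridge
/-- if `K`, `L ⊆ V^𝒟` with `L ⊄ R`, each `x ∈ K` has an edge to some
`y' ∈ L` and each `y ∈ L` an edge from some `x' ∈ K`, then the `⊑`-minimal elements
`c` of `K` and `d` of `L` are joined by an edge `(c, d)`. -/
theorem minimal_elements_edge {D : Type} [Fintype D] [DecidableEq D] {n : ℕ}
    (hn : 1 ≤ n) (R : Set (Fin n → D)) (hR : R.Nonempty)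
    (lvl : DVert D n R → ℕ)
    (hlvl : ∀ a b, DEdge a b → lvl b = lvl a + 1)
    (hmin : ∃ v, lvl v = 0)
    (eord : LinearOrder (D × {t : Fin n → D // t ∈ R}))
    (hconv : ∀ (d₁ d₂ : D) (t₁ t₂ t₃ : {t : Fin n → D // t ∈ R}),
      eord.le (d₁, t₁) (d₂, t₂) → eord.le (d₂, t₂) (d₁, t₃) → d₁ = d₂)
    (eps : DVert D n R → D × {t : Fin n → D // t ∈ R})
    (heps₁ : ∀ x, memP (eps x) x)
    (heps₂ : ∀ x e, memP e x → eord.le (eps x) e)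
    (K L : Set (DVert D n R))
    (hL : ¬ L ⊆ {x : DVert D n R | ∃ t, x = Sum.inr (Sum.inl t)})
    (hKL : ∀ x ∈ K, ∃ y' ∈ L, DEdge x y')
    (hLK : ∀ y ∈ L, ∃ x' ∈ K, DEdge x' y)
    (c d : DVert D n R)
    (hcK : c ∈ K) (hcmin : ∀ x ∈ K, x = c ∨ sqlt lvl eord eps c x)
    (hdL : d ∈ L) (hdmin : ∀ y ∈ L, y = d ∨ sqlt lvl eord eps d y) :
    DEdge c d := by
  letI : LinearOrder (D × {t : Fin n → D // t ∈ R}) := eord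
  obtain ⟨t0, ht0⟩ := hR
  obtain ⟨hbase, htop, hinner⟩ := lvl_facts lvl hn t0 ht0 hlvl hmin
  have hclass0 : ∀ v : DVert D n R, lvl v = 0 → ∃ a, v = Sum.inl a := by
    intro v hv
    match v with
    | Sum.inl a => exact ⟨a, rfl⟩
    | Sum.inr (Sum.inl s) => rw [htop s] at hv; omega
    | Sum.inr (Sum.inr iv) =>
      have h1 := hinner iv
      have h2 := pathDirs_hgt_pos iv.d iv.r iv.j iv.hj0
      omega
  have hnotop : ∀ v : DVert D n R, (¬ ∃ s, v = Sum.inr (Sum.inl s)) → lvl v ≤ n + 1 := by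
    intro v hv
    match v with
    | Sum.inl a => rw [hbase a]; omega
    | Sum.inr (Sum.inl s) => exact absurd ⟨s, rfl⟩ hv
    | Sum.inr (Sum.inr iv) =>
      have h1 := hinner iv
      have h2 := pathDirs_hgt_upper iv.d iv.r iv.j iv.hjlen
      omega
  obtain ⟨y', hy'L, hcy⟩ := hKL c hcK
  obtain ⟨x', hx'K, hxd⟩ := hLK d hdL
  have hly : lvl y' = lvl c + 1 := hlvl _ _ hcy
  have hld : lvl d = lvl x' + 1 := hlvl _ _ hxd
  have hcx : lvl c ≤ lvl x' := by
    rcases hcmin x' hx'K with heq | hs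
    · rw [heq]
    · rcases hs with h | ⟨h, _⟩ | ⟨h, _, _⟩ <;> omega
  have hdy : lvl d ≤ lvl y' := by
    rcases hdmin y' hy'L with heq | hs
    · rw [heq]
    · rcases hs with h | ⟨h, _⟩ | ⟨h, _, _⟩ <;> omega
  have hlx : lvl x' = lvl c := by omega
  have hlvld : lvl d = lvl c + 1 := by omega
  have hlvly : lvl y' = lvl c + 1 := by omega
  have hdle : lvl d ≤ n + 1 := by
    obtain ⟨y0, hy0L, hy0⟩ := Set.not_subset.mp hL
    have h1 : lvl y0 ≤ n + 1 := hnotop y0 hy0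
    rcases hdmin y0 hy0L with heq | hs
    · rw [heq] at h1; exact h1
    · rcases hs with h | ⟨h, _⟩ | ⟨h, _, _⟩ <;> omega
  rcases hdmin y' hy'L with rfl | hsy
  · exact hcy
  rcases hcmin x' hx'K with rfl | hsx
  · exact hxd
  have hsy' : eord.lt (eps d) (eps y') ∨
      (eps d = eps y' ∧ posP (eps d) d < posP (eps d) y') := by
    rcases hsy with h | ⟨_, h⟩ | ⟨_, h1, h2⟩
    · exact absurd h (by omega)
    · exact Or.inl h
    · exact Or.inr ⟨h1, h2⟩
  have hsx' : eord.lt (eps c) (eps x') ∨ eps c = eps x' := by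
    rcases hsx with h | ⟨_, h⟩ | ⟨_, h1, h2⟩
    · exact absurd h (by omega)
    · exact Or.inl h
    · exact Or.inr h1
  by_cases h0 : lvl c = 0
  · -- Case A: c and x' are base vertices
    obtain ⟨c0, rfl⟩ := hclass0 c h0
    obtain ⟨x0, rfl⟩ := hclass0 x' (by omega)
    obtain ⟨t', ht', hy'eq⟩ := DEdge_inl_elim hcy
    obtain ⟨t, ht, hdeq⟩ := DEdge_inl_elim hxd
    have hlen1 : 3 ≤ (pathDirs x0 t).length := pathDirs_len hn x0 t
    have hlen2 : 3 ≤ (pathDirs c0 t').length := pathDirs_len hn c0 t'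
    have hepsd : eps d = (x0, ⟨t, ht⟩) := by
      rw [hdeq]; exact eps_pathVert eps heps₁ (by omega) (by omega)
    have hepsy : eps y' = (c0, ⟨t', ht'⟩) := by
      rw [hy'eq]; exact eps_pathVert eps heps₁ (by omega) (by omega)
    have hgoal : ∀ (s : Fin n → D) (hs : s ∈ R),
        d = pathVert c0 s hs 1 → DEdge (Sum.inl c0) d := by
      intro s hs hd
      have h3 : 3 ≤ (pathDirs c0 s).length := pathDirs_len hn c0 s
      refine ⟨c0, s, hs, 0, by omega, ?_⟩
      rw [if_pos (pathDirs_head c0 s (by omega))]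
      exact ⟨(pathVert_zero c0 s hs).symm, hd⟩
    have hx0c0 : x0 = c0 := by
      rcases hsy' with hlt | ⟨heq, _⟩
      · have le1 : eord.le (eps (Sum.inl c0)) (eps (Sum.inl x0)) := by
          rcases hsx' with h | h
          · exact le_of_lt h
          · exact h ▸ le_refl _
        have le2 : eord.le (eps (Sum.inl x0)) (x0, ⟨t, ht⟩) :=
          heps₂ _ _ ⟨0, by omega, (pathVert_zero x0 t ht).symm⟩
        have le3 : eord.le ((x0, ⟨t, ht⟩) : D × {t : Fin n → D // t ∈ R}) (c0, ⟨t', ht'⟩) := by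
          rw [← hepsd, ← hepsy]; exact le_of_lt hlt
        have heq1 : eps (Sum.inl c0) = (c0, (eps (Sum.inl c0)).2) :=
          Prod.ext (eps_base_fst eps heps₁ c0) rfl
        have heq2 : eps (Sum.inl x0) = (x0, (eps (Sum.inl x0)).2) :=
          Prod.ext (eps_base_fst eps heps₁ x0) rfl
        rw [heq1, heq2] at le1
        rw [heq2] at le2
        exact (hconv c0 x0 _ ⟨t, ht⟩ ⟨t', ht'⟩ (le_trans le1 le2) le3).symm
      · rw [hepsd, hepsy] at heq
        exact (Prod.ext_iff.mp heq).1
    exact hgoal t ht (by rw [hdeq, hx0c0])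
  · -- Case C: all four vertices are inner, on a common path
    have h1c : 1 ≤ lvl c := by omega
    have hcn : lvl c ≤ n := by omega
    obtain ⟨a, t, ht, u, v, hcu, hyv, hule, hvle, hUp⟩ := DEdge_elim hcy
    obtain ⟨a', t', ht', u', v', hxu, hdv, hule', hvle', hUp'⟩ := DEdge_elim hxd
    have lc := lvl_pathVert lvl hlvl a t ht u hule
    have ly := lvl_pathVert lvl hlvl a t ht v hvle
    have lx := lvl_pathVert lvl hlvl a' t' ht' u' hule'
    have ld := lvl_pathVert lvl hlvl a' t' ht' v' hvle'
    rw [← hcu, hbase] at lc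
    rw [← hyv, hbase] at ly
    rw [← hxu, hbase] at lx
    rw [← hdv, hbase] at ld
    have hend1 := pathDirs_hgt_end a t
    have hend2 := pathDirs_hgt_end a' t'
    have hz0 : hgt (pathDirs a t) 0 = 0 := hgt_zero _
    have hz0' : hgt (pathDirs a' t') 0 = 0 := hgt_zero _
    have h0u : 0 < u := by
      rcases Nat.eq_zero_or_pos u with rfl | h
      · omega
      · exact h
    have hulen : u < (pathDirs a t).length := by
      rcases Nat.lt_or_ge u (pathDirs a t).length with h | h
      · exact h
      · have hh : u = (pathDirs a t).length := by omega
        rw [hh] at lc; omega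
    have h0v : 0 < v := by
      rcases Nat.eq_zero_or_pos v with rfl | h
      · omega
      · exact h
    have hvlen : v < (pathDirs a t).length := by
      rcases Nat.lt_or_ge v (pathDirs a t).length with h | h
      · exact h
      · have hh : v = (pathDirs a t).length := by omega
        rw [hh] at ly; omega
    have h0u' : 0 < u' := by
      rcases Nat.eq_zero_or_pos u' with rfl | h
      · omega
      · exact h
    have hulen' : u' < (pathDirs a' t').length := by
      rcases Nat.lt_or_ge u' (pathDirs a' t').length with h | h
      · exact h
      · have hh : u' = (pathDirs a' t').length := by omega
        rw [hh] at lx; omega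
    have h0v' : 0 < v' := by
      rcases Nat.eq_zero_or_pos v' with rfl | h
      · omega
      · exact h
    have hvlen' : v' < (pathDirs a' t').length := by
      rcases Nat.lt_or_ge v' (pathDirs a' t').length with h | h
      · exact h
      · have hh : v' = (pathDirs a' t').length := by omega
        rw [hh] at ld; omega
    have hepsc : eps c = (a, ⟨t, ht⟩) := by
      rw [hcu]; exact eps_pathVert eps heps₁ h0u hulen
    have hepsy : eps y' = (a, ⟨t, ht⟩) := by
      rw [hyv]; exact eps_pathVert eps heps₁ h0v hvlen
    have hepsx : eps x' = (a', ⟨t', ht'⟩) := by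
      rw [hxu]; exact eps_pathVert eps heps₁ h0u' hulen'
    have hepsd : eps d = (a', ⟨t', ht'⟩) := by
      rw [hdv]; exact eps_pathVert eps heps₁ h0v' hvlen'
    have hkey : ((a', ⟨t', ht'⟩) : D × {t : Fin n → D // t ∈ R}) = (a, ⟨t, ht⟩) ∧ v' < v := by
      rcases hsy' with hlt | ⟨heq, hpos⟩
      · exfalso
        rw [hepsd, hepsy] at hlt
        rcases hsx' with hlt2 | heq2
        · rw [hepsc, hepsx] at hlt2
          exact absurd (lt_trans hlt hlt2) (lt_irrefl _)
        · rw [hepsc, hepsx] at heq2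
          rw [← heq2] at hlt
          exact absurd hlt (lt_irrefl _)
      · rw [hepsd, hepsy] at heq
        have p1 : posP (eps d) d = v' := by
          rw [hdv]; exact posP_pathVert _ h0v' hvlen'
        have p2 : posP (eps d) y' = v := by
          rw [hyv]; exact posP_pathVert _ h0v hvlen
        rw [p1, p2] at hpos
        exact ⟨heq, hpos⟩
    obtain ⟨hpair, hvv⟩ := hkey
    have haa : a' = a := (Prod.ext_iff.mp hpair).1
    have htt : t' = t := congrArg Subtype.val (Prod.ext_iff.mp hpair).2
    subst haa
    subst htt
    have hh : hgt (pathDirs a' t') u = hgt (pathDirs a' t') u' := by omega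
    have hfan := ZZL_fan (pathDirs_ZZL a' t') hUp hUp' hh hvv.le
    have hE := UpE_DEdge ht hfan
    rw [← hcu] at hE
    rw [hdv]
    exact hE
end
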